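/- arXiv:1410.1202 — 8 statements merged into one kernel-verified Lean document; each statement's English description precedes it below -/
import Mathlib

section
/- Let λ < 0 and ε > 0 be real numbers with λ + 6ε < 0, let s := Σ_{m≥0} e^{m(λ+6ε)}, and assume s·e^{2ε}·(e^ε − 1) ≤ 1/2 and e^{λ}·(e^ε − 1) ≤ 1. Set c := e^{λ}·(e^ε − 1)/24. Let (q_n)_{n≥0} be a sequence of real numbers with 0 < q_n ≤ 1 and e^{−ε}·q_n ≤ q_{n+1} ≤ e^{ε}·q_n for all n. For each n ≥ 0 let F_n : D(q_n) → D(q_{n+1}) be a holomorphic map with F_n(0) = 0, and set m_n := F_n'(0); assume e^{λ−ε} ≤ |m_n| ≤ e^{λ+ε}. Then there exists a family of injective holomorphic maps η_n : D(c·q_n) → D(q_n) such that η_n(0) = 0, η_n'(0) = 1, and for every n ≥ 0 and every z ∈ D(c·q_n) one has m_n·z ∈ D(c·q_{n+1}) and F_n(η_n(z)) = η_{n+1}(m_n·z). -/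
open Metric Set Filter Complex
open scoped Topology

/-- Maximum modulus on a closed subdisk. -/
lemma maxmod_aux {f : ℂ → ℂ} {R r C : ℝ} (hf : DifferentiableOn ℂ f (ball 0 R))
    (hr : 0 < r) (hrR : r < R) (hC : ∀ w : ℂ, ‖w‖ = r → ‖f w‖ ≤ C) :
    ∀ z : ℂ, ‖z‖ ≤ r → ‖f z‖ ≤ C := by
  intro z hz
  have hsub : closedBall (0:ℂ) r ⊆ ball 0 R := closedBall_subset_ball hrR
  have hd : DiffContOnCl ℂ f (ball (0:ℂ) r) := by
    refine ⟨hf.mono (ball_subset_ball hrR.le), ?_⟩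
    rw [closure_ball (0:ℂ) hr.ne']
    exact hf.continuousOn.mono hsub
  have := Complex.norm_le_of_forall_mem_frontier_norm_le (isBounded_ball) hd
    (C := C) ?_ (z := z) ?_
  · exact this
  · intro w hw
    rw [frontier_ball (0:ℂ) hr.ne'] at hw
    exact hC w (by simpa [mem_sphere_iff_norm] using hw)
  · rw [closure_ball (0:ℂ) hr.ne']
    simpa [mem_closedBall_iff_norm] using hz

/-- Quadratic Schwarz-type lemma: a bounded holomorphic function vanishing at `0`
deviates from its linear part at `0` at most quadratically. -/
lemma schwarz_quad {f : ℂ → ℂ} {R C : ℝ} (hR : 0 < R)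
    (hf : DifferentiableOn ℂ f (ball 0 R)) (hf0 : f 0 = 0)
    (hC : ∀ z ∈ ball (0:ℂ) R, ‖f z‖ ≤ C) :
    ∀ z ∈ ball (0:ℂ) R, ‖f z - deriv f 0 * z‖ ≤ 2 * C / R ^ 2 * ‖z‖ ^ 2 := by
  have hball : ball (0:ℂ) R ∈ 𝓝 (0:ℂ) := ball_mem_nhds _ hR
  have hC0 : 0 ≤ C := le_trans (norm_nonneg _) (hC 0 (by simpa using hR))
  set g : ℂ → ℂ := dslope (dslope f 0) 0 with hg
  have hf1 : DifferentiableOn ℂ (dslope f 0) (ball 0 R) :=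
    (differentiableOn_dslope hball).2 hf
  have hgd : DifferentiableOn ℂ g (ball 0 R) := (differentiableOn_dslope hball).2 hf1
  -- identity : f z = deriv f 0 * z + z^2 * g z
  have hid : ∀ z : ℂ, f z - deriv f 0 * z = z ^ 2 * g z := by
    intro z
    have h1 : (z - 0) • dslope f 0 z = f z - f 0 := sub_smul_dslope f 0 z
    have h2 : (z - 0) • g z = dslope f 0 z - dslope f 0 0 := sub_smul_dslope (dslope f 0) 0 z
    rw [dslope_same] at h2
    simp only [sub_zero, smul_eq_mul, hf0] at h1 h2
    have : dslope f 0 z = deriv f 0 + z * g z := by linear_combination -h2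
    rw [← h1, this]; ring
  -- pointwise bounds at radius r
  have key : ∀ r ∈ Set.Ioo (R/2) R, ∀ z : ℂ, ‖z‖ ≤ r →
      ‖f z - deriv f 0 * z‖ ≤ 2 * C / r ^ 2 * ‖z‖ ^ 2 := by
    intro r hr z hz
    have hr0 : 0 < r := lt_trans (by positivity) hr.1
    have h1 : ∀ w : ℂ, ‖w‖ ≤ r → ‖dslope f 0 w‖ ≤ C / r := by
      refine maxmod_aux hf1 hr0 hr.2 ?_
      intro w hw
      have hw0 : w ≠ 0 := by intro h; rw [h] at hw; simp at hw; linarith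
      rw [dslope_of_ne f hw0, slope_def_field, div_eq_inv_mul]
      simp only [sub_zero, hf0]
      rw [norm_mul, norm_inv, hw]
      have : ‖f w‖ ≤ C := hC w (by simpa [mem_ball_iff_norm, hw] using hr.2)
      rw [mul_comm, div_eq_mul_inv]
      exact mul_le_mul_of_nonneg_right this (by positivity)
    have h2 : ‖deriv f 0‖ ≤ C / r := by
      have := h1 0 (by simpa using hr0.le)
      rwa [dslope_same] at this
    have h3 : ∀ w : ℂ, ‖w‖ ≤ r → ‖g w‖ ≤ 2 * C / r ^ 2 := by
      refine maxmod_aux hgd hr0 hr.2 ?_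
      intro w hw
      have hw0 : w ≠ 0 := by intro h; rw [h] at hw; simp at hw; linarith
      rw [hg, dslope_of_ne _ hw0, slope_def_field, div_eq_inv_mul, sub_zero]
      rw [dslope_same, norm_mul, norm_inv, hw]
      have : ‖dslope f 0 w - deriv f 0‖ ≤ C / r + C / r :=
        le_trans (norm_sub_le _ _) (add_le_add (h1 w hw.le) h2)
      calc r⁻¹ * ‖dslope f 0 w - deriv f 0‖ ≤ r⁻¹ * (C / r + C / r) :=
            mul_le_mul_of_nonneg_left this (by positivity)
        _ = 2 * C / r ^ 2 := by field_simp; ring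
    rw [hid z, norm_mul, norm_pow]
    calc ‖z‖ ^ 2 * ‖g z‖ ≤ ‖z‖ ^ 2 * (2 * C / r ^ 2) :=
          mul_le_mul_of_nonneg_left (h3 z hz) (by positivity)
      _ = 2 * C / r ^ 2 * ‖z‖ ^ 2 := by ring
  -- take the limit r → R
  intro z hz
  have hzR : ‖z‖ < R := by simpa [mem_ball_iff_norm] using hz
  have hmax : max ‖z‖ (R/2) < R := max_lt hzR (by linarith)
  have htends : Tendsto (fun r : ℝ => 2 * C / r ^ 2 * ‖z‖ ^ 2) (𝓝[<] R)
      (𝓝 (2 * C / R ^ 2 * ‖z‖ ^ 2)) := by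
    apply Tendsto.mono_left _ nhdsWithin_le_nhds
    exact ((continuousAt_const.div (continuousAt_id.pow 2) (pow_ne_zero 2 hR.ne')).mul
      continuousAt_const)
  refine ge_of_tendsto htends ?_
  filter_upwards [Ioo_mem_nhdsLT_of_mem (Set.mem_Ioc.2 ⟨hmax, le_refl R⟩)] with r hr
  exact key r ⟨lt_of_le_of_lt (le_max_right _ _) hr.1, hr.2⟩ z
    (le_trans (le_max_left _ _) hr.1.le)

/-- A function bounded by `K‖z‖²` near `0` has derivative `0` at `0`. -/
lemma quad_hasDerivAt_zero {u : ℂ → ℂ} {R K : ℝ} (hR : 0 < R) (hK : 0 < K)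
    (hq : ∀ z ∈ ball (0:ℂ) R, ‖u z‖ ≤ K * ‖z‖ ^ 2) : HasDerivAt u 0 0 := by
  have hu0 : u 0 = 0 := by
    have := hq 0 (by simpa using hR)
    simpa using norm_le_zero_iff.1 (by simpa using this)
  rw [hasDerivAt_iff_isLittleO]
  rw [Asymptotics.isLittleO_iff]
  intro c hc
  have hpos : 0 < min R (c / K) := lt_min hR (by positivity)
  filter_upwards [ball_mem_nhds (0:ℂ) hpos] with z hz
  have hz' : ‖z‖ < min R (c / K) := by simpa [mem_ball_iff_norm] using hz
  have h1 : ‖u z‖ ≤ K * ‖z‖ ^ 2 := hq z (by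
    simp only [mem_ball_iff_norm, sub_zero]
    exact lt_of_lt_of_le hz' (min_le_left _ _))
  simp only [hu0, sub_zero, smul_zero, sub_zero]
  calc ‖u z‖ ≤ K * ‖z‖ ^ 2 := h1
    _ = K * ‖z‖ * ‖z‖ := by ring
    _ ≤ K * (c / K) * ‖z‖ := by
        apply mul_le_mul_of_nonneg_right _ (norm_nonneg _)
        exact mul_le_mul_of_nonneg_left (le_of_lt (lt_of_lt_of_le hz' (min_le_right _ _))) hK.le
    _ = c * ‖z‖ := by field_simp

/-- Derivative bound from a quadratic bound. -/
lemma quad_deriv_bound {u : ℂ → ℂ} {R K : ℝ} (hR : 0 < R) (hK : 0 < K)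
    (hu : DifferentiableOn ℂ u (ball 0 R))
    (hq : ∀ z ∈ ball (0:ℂ) R, ‖u z‖ ≤ K * ‖z‖ ^ 2) :
    ∀ z ∈ closedBall (0:ℂ) (R/6), ‖deriv u z‖ ≤ K * R / 2 := by
  have hball : ball (0:ℂ) R ∈ 𝓝 (0:ℂ) := ball_mem_nhds _ hR
  have hu0 : u 0 = 0 := by
    have := hq 0 (by simpa using hR)
    simpa using norm_le_zero_iff.1 (by simpa using this)
  have hd0 : deriv u 0 = 0 := (quad_hasDerivAt_zero hR hK hq).deriv
  set g : ℂ → ℂ := dslope (dslope u 0) 0 with hgdef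
  have hu1 : DifferentiableOn ℂ (dslope u 0) (ball 0 R) := (differentiableOn_dslope hball).2 hu
  have hgd : DifferentiableOn ℂ g (ball 0 R) := (differentiableOn_dslope hball).2 hu1
  have hid : ∀ z : ℂ, u z = z ^ 2 * g z := by
    intro z
    have h1 : (z - 0) • dslope u 0 z = u z - u 0 := sub_smul_dslope u 0 z
    have h2 : (z - 0) • g z = dslope u 0 z - dslope u 0 0 := sub_smul_dslope (dslope u 0) 0 z
    rw [dslope_same, hd0] at h2
    simp only [sub_zero, smul_eq_mul, hu0] at h1 h2
    have h3 : dslope u 0 z = z * g z := by linear_combination -h2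
    rw [← h1, h3]; ring
  -- |g| ≤ K on the ball
  have hgK : ∀ w ∈ ball (0:ℂ) R, ‖g w‖ ≤ K := by
    intro w hw
    rcases eq_or_ne w 0 with rfl | hw0
    · -- continuity argument
      have hgc : ContinuousAt g 0 := (hgd.differentiableAt hball).continuousAt
      have htd : Tendsto (fun w => ‖g w‖) (𝓝[≠] (0:ℂ)) (𝓝 ‖g 0‖) :=
        (hgc.norm.continuousWithinAt).tendsto
      refine le_of_tendsto htd ?_
      have h1 : ∀ᶠ w in 𝓝 (0:ℂ), w ∈ ball (0:ℂ) R := hball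
      filter_upwards [eventually_nhdsWithin_of_eventually_nhds h1,
        eventually_mem_nhdsWithin] with w hwb hwne
      have := hq w hwb
      rw [hid w] at this
      rw [norm_mul, norm_pow] at this
      have hwz : w ≠ 0 := hwne
      have hw2 : (0:ℝ) < ‖w‖ ^ 2 := pow_pos (norm_pos_iff.2 hwz) 2
      have := mul_comm (‖w‖^2) (‖g w‖) ▸ this
      exact le_of_mul_le_mul_right (by linarith) hw2
    · have := hq w hw
      rw [hid w, norm_mul, norm_pow] at this
      have hw2 : (0:ℝ) < ‖w‖ ^ 2 := pow_pos (norm_pos_iff.2 hw0) 2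
      exact le_of_mul_le_mul_right (by linarith) hw2
  intro z hz
  have hzn : ‖z‖ ≤ R / 6 := by simpa [mem_closedBall_iff_norm] using hz
  have hzball : z ∈ ball (0:ℂ) R := by
    simp only [mem_ball_iff_norm, sub_zero]
    linarith
  have hsub : ball z (R/2) ⊆ ball (0:ℂ) R := by
    intro w hw
    simp only [mem_ball_iff_norm] at hw ⊢
    have : ‖w‖ ≤ ‖w - z‖ + ‖z‖ := by
      calc ‖w‖ = ‖(w - z) + z‖ := by ring_nf
        _ ≤ ‖w - z‖ + ‖z‖ := norm_add_le _ _
    rw [sub_zero]; linarith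
  have hgz : DifferentiableAt ℂ g z := hgd.differentiableAt (isOpen_ball.mem_nhds hzball)
  -- Cauchy-type bound on deriv g z
  have hderg : ‖deriv g z‖ ≤ 3 * K / (R / 2) := by
    have hmaps : MapsTo g (ball z (R/2)) (ball (g z) (3 * K)) := by
      intro w hw
      simp only [mem_ball_iff_norm]
      calc ‖g w - g z‖ ≤ ‖g w‖ + ‖g z‖ := norm_sub_le _ _
        _ ≤ K + K := add_le_add (hgK w (hsub hw)) (hgK z hzball)
        _ < 3 * K := by linarith
    have := norm_dslope_le_div_of_mapsTo_ball (hgd.mono hsub) (hmaps.mono_right ball_subset_closedBall)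
      (z := z) (by simp [mem_ball_iff_norm]; positivity)
    rwa [dslope_same] at this
  -- product rule
  have hder : HasDerivAt u (2 * z * g z + z ^ 2 * deriv g z) z := by
    have h1 : HasDerivAt (fun w : ℂ => w ^ 2) (2 * z) z := by
      simpa using hasDerivAt_pow 2 z
    have h2 : HasDerivAt (fun w : ℂ => w ^ 2 * g w) (2 * z * g z + z ^ 2 * deriv g z) z :=
      h1.mul hgz.hasDerivAt
    have : u = fun w : ℂ => w ^ 2 * g w := funext hid
    rw [this]; exact h2
  rw [hder.deriv]
  have hb1 : ‖2 * z * g z‖ ≤ 2 * (R/6) * K := by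
    rw [norm_mul, norm_mul]
    simp only [Complex.norm_ofNat]
    have h1 : ‖z‖ * ‖g z‖ ≤ (R/6) * K :=
      mul_le_mul hzn (hgK z hzball) (norm_nonneg _) (by positivity)
    nlinarith [norm_nonneg z, norm_nonneg (g z)]
  have hb2 : ‖z ^ 2 * deriv g z‖ ≤ (R/6)^2 * (3 * K / (R/2)) := by
    rw [norm_mul, norm_pow]
    have h1 : ‖z‖^2 ≤ (R/6)^2 := pow_le_pow_left₀ (norm_nonneg _) hzn 2
    have h2 : (0:ℝ) ≤ 3 * K / (R/2) := by positivity
    exact mul_le_mul h1 hderg (norm_nonneg _) (by positivity)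
  have harith : 2 * (R/6) * K + (R/6)^2 * (3 * K / (R/2)) = K * R / 2 := by
    field_simp; ring
  calc ‖2 * z * g z + z ^ 2 * deriv g z‖ ≤ ‖2 * z * g z‖ + ‖z ^ 2 * deriv g z‖ := norm_add_le _ _
    _ ≤ 2 * (R/6) * K + (R/6)^2 * (3 * K / (R/2)) := add_le_add hb1 hb2
    _ = K * R / 2 := harith

set_option maxHeartbeats 1000000

/-- **Linearization along local stable manifolds** (coordinate form).
Given an ε-tempered sequence of radii `q n` and holomorphic maps
`F n : D(q n) → D(q (n+1))` fixing `0` with derivatives `m n` of modulus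
comparable to `e^λ`, there exist injective holomorphic maps
`η n : D(c·q n) → D(q n)` tangent to the identity at `0` that conjugate the
maps `F n` to the linear maps `z ↦ m n · z`. -/
theorem linearization_along_stable_manifolds
    (lam ε : ℝ) (hlam : lam < 0) (hε : 0 < ε) (h6 : lam + 6 * ε < 0)
    (s : ℝ) (hs : s = ∑' m : ℕ, Real.exp ((m : ℝ) * (lam + 6 * ε)))
    (hcond1 : s * Real.exp (2 * ε) * (Real.exp ε - 1) ≤ 1 / 2)
    (hcond2 : Real.exp lam * (Real.exp ε - 1) ≤ 1)
    (c : ℝ) (hc : c = Real.exp lam * (Real.exp ε - 1) / 24)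
    (q : ℕ → ℝ) (hq0 : ∀ n, 0 < q n) (hq1 : ∀ n, q n ≤ 1)
    (hqtemp : ∀ n, Real.exp (-ε) * q n ≤ q (n + 1) ∧ q (n + 1) ≤ Real.exp ε * q n)
    (F : ℕ → ℂ → ℂ)
    (hFhol : ∀ n, DifferentiableOn ℂ (F n) (Metric.ball 0 (q n)))
    (hFmaps : ∀ n, Set.MapsTo (F n) (Metric.ball 0 (q n)) (Metric.ball 0 (q (n + 1))))
    (hF0 : ∀ n, F n 0 = 0)
    (m : ℕ → ℂ) (hm : ∀ n, m n = deriv (F n) 0)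
    (hmlow : ∀ n, Real.exp (lam - ε) ≤ ‖m n‖)
    (hmup : ∀ n, ‖m n‖ ≤ Real.exp (lam + ε)) :
    ∃ η : ℕ → ℂ → ℂ,
      (∀ n, Set.InjOn (η n) (Metric.ball 0 (c * q n))) ∧
      (∀ n, DifferentiableOn ℂ (η n) (Metric.ball 0 (c * q n))) ∧
      (∀ n, Set.MapsTo (η n) (Metric.ball 0 (c * q n)) (Metric.ball 0 (q n))) ∧
      (∀ n, η n 0 = 0) ∧
      (∀ n, deriv (η n) 0 = 1) ∧
      (∀ n, ∀ z ∈ Metric.ball (0 : ℂ) (c * q n),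
        m n * z ∈ Metric.ball (0 : ℂ) (c * q (n + 1)) ∧
        F n (η n z) = η (n + 1) (m n * z)) := by
  -- ## Basic numeric facts
  have hexpε : 1 < Real.exp ε := Real.one_lt_exp_iff.2 hε
  have hexplam : 0 < Real.exp lam := Real.exp_pos _
  set ρ : ℝ := Real.exp lam * (Real.exp ε - 1) / 2 with hρ
  have hρpos : 0 < ρ := by rw [hρ]; nlinarith [hexplam, hexpε]
  have hcρ : c = ρ / 12 := by rw [hc, hρ]; ring
  have hρhalf : ρ ≤ 1 / 2 := by rw [hρ]; linarith
  have hcpos : 0 < c := by rw [hcρ]; linarith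
  have hc24 : c ≤ 1 / 24 := by rw [hc]; linarith
  have hml : ∀ n, Real.exp (lam - ε) ≤ ‖m n‖ := by
    intro n; exact hmlow n
  have hmu : ∀ n, ‖m n‖ ≤ Real.exp (lam + ε) := by
    intro n; exact hmup n
  have hm0 : ∀ n, m n ≠ 0 := by
    intro n
    have : 0 < ‖m n‖ := lt_of_lt_of_le (Real.exp_pos _) (hml n)
    exact norm_pos_iff.1 this
  -- ## Schwarz bound for each F
  have hFbound : ∀ j, ∀ w ∈ Metric.ball (0:ℂ) (q j),
      ‖F j w - m j * w‖ ≤ 2 * Real.exp ε / q j * ‖w‖ ^ 2 := by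
    intro j w hw
    have hCb : ∀ z ∈ Metric.ball (0:ℂ) (q j), ‖F j z‖ ≤ Real.exp ε * q j := by
      intro z hz
      have h1 : ‖F j z‖ < q (j + 1) := by
        simpa [mem_ball_iff_norm] using hFmaps j hz
      have h2 := (hqtemp j).2
      linarith
    have := schwarz_quad (hq0 j) (hFhol j) (hF0 j) hCb w hw
    rw [← hm j] at this
    have heq : 2 * (Real.exp ε * q j) / q j ^ 2 = 2 * Real.exp ε / q j := by
      field_simp [(hq0 j).ne']
    rwa [heq] at this
  -- ## Tempered radius bounds
  have hqup : ∀ (n k : ℕ), q (n + k) ≤ Real.exp (k * ε) * q n := by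
    intro n k; induction k with
    | zero => simp
    | succ k ih =>
      have h1 := (hqtemp (n + k)).2
      have h2 : Real.exp ε * q (n + k) ≤ Real.exp ε * (Real.exp (k * ε) * q n) :=
        mul_le_mul_of_nonneg_left ih (Real.exp_pos _).le
      have h3 : Real.exp ε * Real.exp (k * ε) = Real.exp ((k + 1 : ℕ) * ε) := by
        rw [← Real.exp_add]; congr 1; push_cast; ring
      calc q (n + (k + 1)) ≤ Real.exp ε * q (n + k) := h1
        _ ≤ Real.exp ε * Real.exp (k * ε) * q n := by linarith [h2]
        _ = Real.exp ((k + 1 : ℕ) * ε) * q n := by rw [h3]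
  have hqdown : ∀ (n k : ℕ), q n ≤ Real.exp (k * ε) * q (n + k) := by
    intro n k; induction k with
    | zero => simp
    | succ k ih =>
      have h1 := (hqtemp (n + k)).1
      have h2 : q (n + k) ≤ Real.exp ε * q (n + k + 1) := by
        have h3 : Real.exp (-ε) * Real.exp ε = 1 := by
          rw [← Real.exp_add]; simp
        nlinarith [Real.exp_pos ε, Real.exp_pos (-ε), hq0 (n + k + 1)]
      have h3 : Real.exp (k * ε) * Real.exp ε = Real.exp ((k + 1 : ℕ) * ε) := by
        rw [← Real.exp_add]; congr 1; push_cast; ring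
      calc q n ≤ Real.exp (k * ε) * q (n + k) := ih
        _ ≤ Real.exp (k * ε) * (Real.exp ε * q (n + k + 1)) := by
            exact mul_le_mul_of_nonneg_left h2 (Real.exp_pos _).le
        _ = Real.exp ((k + 1 : ℕ) * ε) * q (n + (k + 1)) := by rw [← h3]; ring_nf
  -- ## The orbit maps and derivative products
  set Φ : ℕ → ℕ → ℂ → ℂ := fun n k =>
    Nat.rec (motive := fun _ => ℂ → ℂ) id (fun j Φj => F (n + j) ∘ Φj) k with hΦdef
  have hΦ0 : ∀ n z, Φ n 0 z = z := fun n z => rfl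
  have hΦs : ∀ n k z, Φ n (k + 1) z = F (n + k) (Φ n k z) := fun n k z => rfl
  set M : ℕ → ℕ → ℂ := fun n k => ∏ j ∈ Finset.range k, m (n + j) with hMdef
  have hM0 : ∀ n, M n 0 = 1 := fun n => Finset.prod_range_zero _
  have hMs : ∀ n k, M n (k + 1) = M n k * m (n + k) := fun n k => Finset.prod_range_succ _ _
  have hMlow : ∀ (n k : ℕ), Real.exp (k * (lam - ε)) ≤ ‖M n k‖ := by
    intro n k; induction k with
    | zero => simp [hM0]
    | succ k ih =>
      rw [hMs, norm_mul]
      have h3 : Real.exp ((k + 1 : ℕ) * (lam - ε))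
          = Real.exp (k * (lam - ε)) * Real.exp (lam - ε) := by
        rw [← Real.exp_add]; congr 1; push_cast; ring
      rw [h3]
      exact mul_le_mul ih (hml (n + k)) (Real.exp_pos _).le (norm_nonneg _)
  have hMpos : ∀ n k, 0 < ‖M n k‖ :=
    fun n k => lt_of_lt_of_le (Real.exp_pos _) (hMlow n k)
  have hMne : ∀ n k, M n k ≠ 0 := fun n k => norm_pos_iff.1 (hMpos n k)
  -- ## Orbit estimate
  have hstepfac : Real.exp (lam + ε) + 2 * Real.exp ε * ρ = Real.exp (lam + 2 * ε) := by
    rw [hρ]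
    have h1 : Real.exp (lam + ε) = Real.exp lam * Real.exp ε := by rw [← Real.exp_add]
    have h2 : Real.exp (lam + 2 * ε) = Real.exp lam * Real.exp ε * Real.exp ε := by
      rw [← Real.exp_add, ← Real.exp_add]; congr 1; ring
    rw [h1, h2]; ring
  have horbit : ∀ n (z : ℂ), ‖z‖ < ρ * q n → ∀ k,
      ‖Φ n k z‖ ≤ Real.exp (k * (lam + 2 * ε)) * ‖z‖ := by
    intro n z hz k
    induction k with
    | zero => simp [hΦ0]
    | succ k ih =>
      have hqnk : 0 < q (n + k) := hq0 (n + k)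
      -- membership of w := Φ n k z
      have hwmem : ‖Φ n k z‖ < ρ * q (n + k) := by
        have h1 : Real.exp (k * (lam + 2 * ε)) * ‖z‖ < Real.exp (k * (lam + 2 * ε)) * (ρ * q n) :=
          mul_lt_mul_of_pos_left hz (Real.exp_pos _)
        have h2 : q n ≤ Real.exp (k * ε) * q (n + k) := hqdown n k
        have h3 : Real.exp (k * (lam + 2 * ε)) * Real.exp (k * ε) ≤ 1 := by
          rw [← Real.exp_add, Real.exp_le_one_iff]
          have : (k : ℝ) * (lam + 2 * ε) + k * ε = k * (lam + 3 * ε) := by ring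
          rw [this]
          apply mul_nonpos_of_nonneg_of_nonpos (Nat.cast_nonneg k)
          linarith
        calc ‖Φ n k z‖ ≤ Real.exp (k * (lam + 2 * ε)) * ‖z‖ := ih
          _ < Real.exp (k * (lam + 2 * ε)) * (ρ * q n) := h1
          _ ≤ Real.exp (k * (lam + 2 * ε)) * (ρ * (Real.exp (k * ε) * q (n + k))) := by
              apply mul_le_mul_of_nonneg_left _ (Real.exp_pos _).le
              exact mul_le_mul_of_nonneg_left h2 hρpos.le
          _ = (Real.exp (k * (lam + 2 * ε)) * Real.exp (k * ε)) * (ρ * q (n + k)) := by ring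
          _ ≤ 1 * (ρ * q (n + k)) := by
              apply mul_le_mul_of_nonneg_right h3; exact mul_nonneg hρpos.le (hq0 _).le
          _ = ρ * q (n + k) := one_mul _
      have hwball : Φ n k z ∈ Metric.ball (0:ℂ) (q (n + k)) := by
        rw [mem_ball_iff_norm, sub_zero]
        nlinarith [hwmem, hρhalf, hqnk]
      have hFb := hFbound (n + k) _ hwball
      have hnorm : ‖Φ n (k + 1) z‖ ≤ ‖m (n + k)‖ * ‖Φ n k z‖
          + 2 * Real.exp ε / q (n + k) * ‖Φ n k z‖ ^ 2 := by
        rw [hΦs]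
        calc ‖F (n + k) (Φ n k z)‖
            = ‖m (n + k) * Φ n k z + (F (n + k) (Φ n k z) - m (n + k) * Φ n k z)‖ := by
              ring_nf
          _ ≤ ‖m (n + k) * Φ n k z‖ + ‖F (n + k) (Φ n k z) - m (n + k) * Φ n k z‖ :=
              norm_add_le _ _
          _ ≤ ‖m (n + k)‖ * ‖Φ n k z‖ + 2 * Real.exp ε / q (n + k) * ‖Φ n k z‖ ^ 2 := by
              rw [norm_mul]; exact add_le_add le_rfl hFb
      have hquadterm : 2 * Real.exp ε / q (n + k) * ‖Φ n k z‖ ^ 2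
          ≤ 2 * Real.exp ε * ρ * ‖Φ n k z‖ := by
        have h1 : ‖Φ n k z‖ ^ 2 = ‖Φ n k z‖ * ‖Φ n k z‖ := sq _
        rw [h1]
        have h2 : 2 * Real.exp ε / q (n + k) * (‖Φ n k z‖ * ‖Φ n k z‖)
            = (2 * Real.exp ε / q (n + k) * ‖Φ n k z‖) * ‖Φ n k z‖ := by ring
        rw [h2]
        apply mul_le_mul_of_nonneg_right _ (norm_nonneg _)
        calc 2 * Real.exp ε / q (n + k) * ‖Φ n k z‖
            ≤ 2 * Real.exp ε / q (n + k) * (ρ * q (n + k)) := by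
              apply mul_le_mul_of_nonneg_left hwmem.le; positivity
          _ = 2 * Real.exp ε * ρ := by field_simp
      have hmul : Real.exp (lam + 2 * ε) * Real.exp (k * (lam + 2 * ε))
          = Real.exp ((k + 1 : ℕ) * (lam + 2 * ε)) := by
        rw [← Real.exp_add]; congr 1; push_cast; ring
      calc ‖Φ n (k + 1) z‖
          ≤ ‖m (n + k)‖ * ‖Φ n k z‖ + 2 * Real.exp ε / q (n + k) * ‖Φ n k z‖ ^ 2 := hnorm
        _ ≤ Real.exp (lam + ε) * ‖Φ n k z‖ + 2 * Real.exp ε * ρ * ‖Φ n k z‖ := by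
            apply add_le_add _ hquadterm
            exact mul_le_mul_of_nonneg_right (hmu (n + k)) (norm_nonneg _)
        _ = Real.exp (lam + 2 * ε) * ‖Φ n k z‖ := by rw [← hstepfac]; ring
        _ ≤ Real.exp (lam + 2 * ε) * (Real.exp (k * (lam + 2 * ε)) * ‖z‖) := by
            exact mul_le_mul_of_nonneg_left ih (Real.exp_pos _).le
        _ = Real.exp ((k + 1 : ℕ) * (lam + 2 * ε)) * ‖z‖ := by rw [← hmul]; ring
  -- membership corollary
  have horbitmem : ∀ n (z : ℂ), ‖z‖ < ρ * q n → ∀ k, ‖Φ n k z‖ < ρ * q (n + k) := by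
    intro n z hz k
    have ih := horbit n z hz k
    have h2 : q n ≤ Real.exp (k * ε) * q (n + k) := hqdown n k
    have h3 : Real.exp (k * (lam + 2 * ε)) * Real.exp (k * ε) ≤ 1 := by
      rw [← Real.exp_add, Real.exp_le_one_iff]
      have : (k : ℝ) * (lam + 2 * ε) + k * ε = k * (lam + 3 * ε) := by ring
      rw [this]
      apply mul_nonpos_of_nonneg_of_nonpos (Nat.cast_nonneg k)
      linarith
    calc ‖Φ n k z‖ ≤ Real.exp (k * (lam + 2 * ε)) * ‖z‖ := ih
      _ < Real.exp (k * (lam + 2 * ε)) * (ρ * q n) := mul_lt_mul_of_pos_left hz (Real.exp_pos _)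
      _ ≤ Real.exp (k * (lam + 2 * ε)) * (ρ * (Real.exp (k * ε) * q (n + k))) := by
          apply mul_le_mul_of_nonneg_left _ (Real.exp_pos _).le
          exact mul_le_mul_of_nonneg_left h2 hρpos.le
      _ = (Real.exp (k * (lam + 2 * ε)) * Real.exp (k * ε)) * (ρ * q (n + k)) := by ring
      _ ≤ 1 * (ρ * q (n + k)) := by
          apply mul_le_mul_of_nonneg_right h3; exact mul_nonneg hρpos.le (hq0 _).le
      _ = ρ * q (n + k) := one_mul _
  have hballsub : ∀ n, Metric.ball (0:ℂ) (ρ * q n) ⊆ Metric.ball (0:ℂ) (q n) := by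
    intro n
    apply Metric.ball_subset_ball
    nlinarith [hq0 n, hρhalf, hρpos]
  have hΦdiff : ∀ n k, DifferentiableOn ℂ (Φ n k) (Metric.ball 0 (ρ * q n)) := by
    intro n k; induction k with
    | zero => exact differentiableOn_id
    | succ k ih =>
      have hmaps : Set.MapsTo (Φ n k) (Metric.ball (0:ℂ) (ρ * q n))
          (Metric.ball (0:ℂ) (q (n + k))) := by
        intro z hz
        rw [mem_ball_iff_norm, sub_zero] at hz ⊢
        have := horbitmem n z hz k
        nlinarith [hq0 (n + k), hρhalf, hρpos]
      have : DifferentiableOn ℂ (F (n + k) ∘ Φ n k) (Metric.ball 0 (ρ * q n)) :=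
        (hFhol (n + k)).comp ih hmaps
      exact this.congr (fun z _ => (hΦs n k z))
  have hΦzero : ∀ n k, Φ n k 0 = 0 := by
    intro n k; induction k with
    | zero => exact hΦ0 n 0
    | succ k ih => rw [hΦs, ih, hF0]
  -- ## The telescoping series
  set d : ℕ → ℕ → ℂ → ℂ := fun n k z => Φ n (k + 1) z / M n (k + 1) - Φ n k z / M n k
    with hddef
  set u : ℕ → ℂ → ℂ := fun n z => ∑' k, d n k z with hudef
  set ψ : ℕ → ℂ → ℂ := fun n z => z + u n z with hψdef
  -- bound on the terms
  have hdbound : ∀ (n : ℕ) (z : ℂ), ‖z‖ < ρ * q n → ∀ (k : ℕ),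
      ‖d n k z‖ ≤ (2 * Real.exp (2 * ε - lam) / q n * ‖z‖ ^ 2) * Real.exp (k * (lam + 6 * ε)) := by
    intro n z hz k
    have hwmem : ‖Φ n k z‖ < ρ * q (n + k) := horbitmem n z hz k
    have hwball : Φ n k z ∈ Metric.ball (0:ℂ) (q (n + k)) := by
      rw [mem_ball_iff_norm, sub_zero]
      nlinarith [hq0 (n + k), hρhalf, hρpos]
    have hdeq : d n k z = (F (n + k) (Φ n k z) - m (n + k) * Φ n k z) / M n (k + 1) := by
      rw [hddef]
      simp only
      rw [hΦs, hMs]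
      field_simp [hMne n k, hm0 (n + k)]
    rw [hdeq, norm_div]
    have hnum : ‖F (n + k) (Φ n k z) - m (n + k) * Φ n k z‖
        ≤ 2 * Real.exp ε / q (n + k) * ‖Φ n k z‖ ^ 2 := hFbound (n + k) _ hwball
    have hw2 : ‖Φ n k z‖ ^ 2 ≤ (Real.exp (k * (lam + 2 * ε)) * ‖z‖) ^ 2 := by
      apply pow_le_pow_left₀ (norm_nonneg _) (horbit n z hz k)
    have hqinv : 1 / q (n + k) ≤ Real.exp (k * ε) / q n := by
      rw [div_le_div_iff₀ (hq0 (n + k)) (hq0 n)]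
      calc 1 * q n = q n := one_mul _
        _ ≤ Real.exp (k * ε) * q (n + k) := hqdown n k
    have hMk : Real.exp ((k + 1 : ℕ) * (lam - ε)) ≤ ‖M n (k + 1)‖ := hMlow n (k + 1)
    have hexp1 : (0:ℝ) < Real.exp ((k + 1 : ℕ) * (lam - ε)) := Real.exp_pos _
    -- combine
    have hnum2 : ‖F (n + k) (Φ n k z) - m (n + k) * Φ n k z‖
        ≤ 2 * Real.exp ε * (Real.exp (k * ε) / q n) * (Real.exp (k * (lam + 2 * ε))) ^ 2
          * ‖z‖ ^ 2 := by
      calc ‖F (n + k) (Φ n k z) - m (n + k) * Φ n k z‖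
          ≤ 2 * Real.exp ε / q (n + k) * ‖Φ n k z‖ ^ 2 := hnum
        _ ≤ 2 * Real.exp ε / q (n + k) * ((Real.exp (k * (lam + 2 * ε)) * ‖z‖) ^ 2) := by
            exact mul_le_mul_of_nonneg_left hw2
              (div_nonneg (by positivity) (hq0 (n + k)).le)
        _ = 2 * Real.exp ε * (1 / q (n + k)) * (Real.exp (k * (lam + 2 * ε))) ^ 2 * ‖z‖ ^ 2 := by
            ring
        _ ≤ 2 * Real.exp ε * (Real.exp (k * ε) / q n) * (Real.exp (k * (lam + 2 * ε))) ^ 2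
            * ‖z‖ ^ 2 := by
            apply mul_le_mul_of_nonneg_right _ (by positivity)
            apply mul_le_mul_of_nonneg_right _ (by positivity)
            apply mul_le_mul_of_nonneg_left hqinv (by positivity)
    have hdivle : ‖F (n + k) (Φ n k z) - m (n + k) * Φ n k z‖ / ‖M n (k + 1)‖
        ≤ (2 * Real.exp ε * (Real.exp (k * ε) / q n) * (Real.exp (k * (lam + 2 * ε))) ^ 2
          * ‖z‖ ^ 2) / Real.exp ((k + 1 : ℕ) * (lam - ε)) := by
      refine div_le_div₀ ?_ hnum2 hexp1 hMk
      have h1 : (0:ℝ) ≤ Real.exp (k * ε) / q n := div_nonneg (Real.exp_pos _).le (hq0 n).le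
      positivity
    refine le_trans hdivle (le_of_eq ?_)
    have hexpeq : Real.exp ε * Real.exp (k * ε) * (Real.exp (k * (lam + 2 * ε))) ^ 2
        = Real.exp (2 * ε - lam) * Real.exp (k * (lam + 6 * ε))
          * Real.exp ((k + 1 : ℕ) * (lam - ε)) := by
      rw [sq, ← Real.exp_add, ← Real.exp_add, ← Real.exp_add, ← Real.exp_add, ← Real.exp_add]
      congr 1
      push_cast
      ring
    rw [div_eq_iff (ne_of_gt hexp1)]
    field_simp [(hq0 n).ne']
    push_cast at hexpeq ⊢
    rw [show lam + ε * 6 = lam + 6 * ε by ring]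
    linear_combination ‖z‖ ^ 2 * hexpeq
  -- geometric facts
  have hgeo : Summable (fun k : ℕ => Real.exp (k * (lam + 6 * ε))) :=
    Real.summable_exp_nat_mul_iff.2 h6
  have hs0 : 0 ≤ s := by
    rw [hs]; exact tsum_nonneg (fun k => (Real.exp_pos _).le)
  -- summability of the series
  have hdsummable : ∀ (n : ℕ) (z : ℂ), ‖z‖ < ρ * q n → Summable (fun k => d n k z) := by
    intro n z hz
    apply Summable.of_norm_bounded (hgeo.mul_left (2 * Real.exp (2 * ε - lam) / q n * ‖z‖ ^ 2))
    exact hdbound n z hz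
  -- quadratic bound for u
  have hKval : ∀ n : ℕ, 2 * Real.exp (2 * ε - lam) / q n * s ≤ 1 / (2 * ρ * q n) := by
    intro n
    have hqn := hq0 n
    have hkey : 2 * Real.exp (2 * ε - lam) * s * (2 * ρ) ≤ 1 := by
      have h1 : Real.exp (2 * ε - lam) * Real.exp lam = Real.exp (2 * ε) := by
        rw [← Real.exp_add]; congr 1; ring
      have h2 : 2 * ρ = Real.exp lam * (Real.exp ε - 1) := by rw [hρ]; ring
      rw [h2]
      calc 2 * Real.exp (2 * ε - lam) * s * (Real.exp lam * (Real.exp ε - 1))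
          = 2 * (s * (Real.exp (2 * ε - lam) * Real.exp lam) * (Real.exp ε - 1)) := by ring
        _ = 2 * (s * Real.exp (2 * ε) * (Real.exp ε - 1)) := by rw [h1]
        _ ≤ 2 * (1 / 2) := by
            apply mul_le_mul_of_nonneg_left hcond1 (by norm_num)
        _ = 1 := by norm_num
    rw [div_mul_eq_mul_div, div_le_div_iff₀ hqn (by positivity)]
    nlinarith [hs0, Real.exp_pos (2 * ε - lam)]
  have hquad : ∀ (n : ℕ), ∀ z ∈ Metric.ball (0:ℂ) (ρ * q n),
      ‖u n z‖ ≤ 1 / (2 * ρ * q n) * ‖z‖ ^ 2 := by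
    intro n z hz
    rw [mem_ball_iff_norm, sub_zero] at hz
    have hsum := hdsummable n z hz
    have hnorm_sum : Summable (fun k => ‖d n k z‖) := by
      apply Summable.of_nonneg_of_le (fun k => norm_nonneg _) (hdbound n z hz)
      exact hgeo.mul_left _
    calc ‖u n z‖ ≤ ∑' k, ‖d n k z‖ := norm_tsum_le_tsum_norm hnorm_sum
      _ ≤ ∑' k : ℕ, (2 * Real.exp (2 * ε - lam) / q n * ‖z‖ ^ 2) * Real.exp (k * (lam + 6 * ε)) :=
          Summable.tsum_le_tsum (hdbound n z hz) hnorm_sum (hgeo.mul_left _)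
      _ = (2 * Real.exp (2 * ε - lam) / q n * ‖z‖ ^ 2) * s := by
          rw [tsum_mul_left, hs]
      _ = (2 * Real.exp (2 * ε - lam) / q n * s) * ‖z‖ ^ 2 := by ring
      _ ≤ 1 / (2 * ρ * q n) * ‖z‖ ^ 2 := by
          apply mul_le_mul_of_nonneg_right (hKval n) (by positivity)
  -- partial sums are the normalized orbit maps
  have hpartial : ∀ (n : ℕ) (z : ℂ) (K : ℕ),
      z + ∑ k ∈ Finset.range K, d n k z = Φ n K z / M n K := by
    intro n z K; induction K with
    | zero => simp [hΦ0, hM0]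
    | succ K ih =>
      rw [Finset.sum_range_succ, ← add_assoc, ih, hddef]
      simp only
      ring
  -- limit description of ψ
  have hψlim : ∀ (n : ℕ) (z : ℂ), ‖z‖ < ρ * q n →
      Filter.Tendsto (fun K => Φ n K z / M n K) Filter.atTop (nhds (ψ n z)) := by
    intro n z hz
    have h1 := (hdsummable n z hz).hasSum.tendsto_sum_nat
    have h2 : Filter.Tendsto (fun K => z + ∑ k ∈ Finset.range K, d n k z)
        Filter.atTop (nhds (z + u n z)) := tendsto_const_nhds.add h1
    exact h2.congr (fun K => hpartial n z K)
  -- differentiability of ψ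
  have hddiff : ∀ (n k : ℕ), DifferentiableOn ℂ (d n k) (Metric.ball 0 (ρ * q n)) := by
    intro n k
    exact ((hΦdiff n (k + 1)).div_const _).sub ((hΦdiff n k).div_const _)
  have hudiff : ∀ n : ℕ, DifferentiableOn ℂ (u n) (Metric.ball 0 (ρ * q n)) := by
    intro n
    have hb : ∀ (k : ℕ) (z : ℂ), z ∈ Metric.ball (0:ℂ) (ρ * q n) →
        ‖d n k z‖ ≤ (2 * Real.exp (2 * ε - lam) / q n * (ρ * q n) ^ 2)
          * Real.exp (k * (lam + 6 * ε)) := by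
      intro k z hz
      rw [mem_ball_iff_norm, sub_zero] at hz
      calc ‖d n k z‖ ≤ (2 * Real.exp (2 * ε - lam) / q n * ‖z‖ ^ 2)
            * Real.exp (k * (lam + 6 * ε)) := hdbound n z hz k
        _ ≤ (2 * Real.exp (2 * ε - lam) / q n * (ρ * q n) ^ 2)
            * Real.exp (k * (lam + 6 * ε)) := by
            apply mul_le_mul_of_nonneg_right _ (Real.exp_pos _).le
            apply mul_le_mul_of_nonneg_left _
              (div_nonneg (by positivity) (hq0 n).le)
            apply pow_le_pow_left₀ (norm_nonneg _) hz.le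
    have huni := tendstoUniformlyOn_tsum
      (hgeo.mul_left (2 * Real.exp (2 * ε - lam) / q n * (ρ * q n) ^ 2))
      (f := fun k z => d n k z) (s := Metric.ball (0:ℂ) (ρ * q n)) (fun k z hz => hb k z hz)
    have : DifferentiableOn ℂ (fun z => ∑' k, d n k z) (Metric.ball 0 (ρ * q n)) := by
      apply huni.tendstoLocallyUniformlyOn.differentiableOn _ Metric.isOpen_ball
      filter_upwards with t
      exact DifferentiableOn.fun_sum (fun k _ => hddiff n k)
    exact this
  have hψdiff : ∀ n : ℕ, DifferentiableOn ℂ (ψ n) (Metric.ball 0 (ρ * q n)) :=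
    fun n => differentiableOn_id.add (hudiff n)
  -- ψ fixes the origin
  have hψ0 : ∀ n : ℕ, ψ n 0 = 0 := by
    intro n
    have hd0 : ∀ k : ℕ, d n k (0:ℂ) = 0 := by
      intro k
      show Φ n (k + 1) 0 / M n (k + 1) - Φ n k 0 / M n k = 0
      rw [hΦzero n (k + 1), hΦzero n k]
      simp
    show (0:ℂ) + (∑' k, d n k 0) = 0
    rw [tsum_congr hd0]
    simp
  -- the functional equation
  have hfe : ∀ (n : ℕ) (w : ℂ), ‖w‖ < ρ * q n → ‖F n w‖ < ρ * q (n + 1) →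
      ψ (n + 1) (F n w) = m n * ψ n w := by
    intro n w hw hFw
    have hΦshift : ∀ K : ℕ, Φ (n + 1) K (F n w) = Φ n (K + 1) w := by
      intro K; induction K with
      | zero =>
        rw [hΦ0, hΦs, hΦ0]
        norm_num
      | succ K ih =>
        have hnk : n + 1 + K = n + (K + 1) := by omega
        rw [hΦs, ih, hΦs n (K + 1) w, hnk]
    have hMshift : ∀ K : ℕ, m n * M (n + 1) K = M n (K + 1) := by
      intro K; induction K with
      | zero => rw [hM0, hMs, hM0]; norm_num
      | succ K ih =>
        rw [hMs, hMs, ← ih]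
        have : n + 1 + K = n + (K + 1) := by omega
        rw [this]; ring
    have h1 : Filter.Tendsto (fun K => Φ (n + 1) K (F n w) / M (n + 1) K)
        Filter.atTop (nhds (ψ (n + 1) (F n w))) := hψlim (n + 1) (F n w) hFw
    have h2 : Filter.Tendsto (fun K => Φ n K w / M n K) Filter.atTop (nhds (ψ n w)) :=
      hψlim n w hw
    have h3 : Filter.Tendsto (fun K : ℕ => Φ n (K + 1) w / M n (K + 1))
        Filter.atTop (nhds (ψ n w)) := by
      have := h2.comp (Filter.tendsto_add_atTop_nat 1)
      exact this
    have h4 : Filter.Tendsto (fun K : ℕ => m n * (Φ n (K + 1) w / M n (K + 1)))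
        Filter.atTop (nhds (m n * ψ n w)) := h3.const_mul (m n)
    have heq : ∀ K : ℕ, Φ (n + 1) K (F n w) / M (n + 1) K
        = m n * (Φ n (K + 1) w / M n (K + 1)) := by
      intro K
      rw [hΦshift K, ← hMshift K]
      have hMne' : M (n + 1) K ≠ 0 := hMne (n + 1) K
      field_simp [hm0 n]
    exact tendsto_nhds_unique h1 (h4.congr (fun K => (heq K).symm))
  -- ## The inverse maps
  have hr2eq : ∀ n : ℕ, 2 * c * q n = ρ * q n / 6 := by
    intro n; rw [hcρ]; ring
  have hr2pos : ∀ n : ℕ, 0 < 2 * c * q n := by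
    intro n; have := hq0 n; positivity
  have hρqpos : ∀ n : ℕ, 0 < ρ * q n := by
    intro n; have := hq0 n; positivity
  have hsubcb : ∀ n : ℕ, Metric.closedBall (0:ℂ) (2 * c * q n) ⊆ Metric.ball 0 (ρ * q n) := by
    intro n
    apply Metric.closedBall_subset_ball
    rw [hr2eq n]
    nlinarith [hρqpos n]
  -- derivative bound for u on the small closed ball
  have hu'bound : ∀ n : ℕ, ∀ z ∈ Metric.closedBall (0:ℂ) (2 * c * q n),
      ‖deriv (u n) z‖ ≤ 1 / 4 := by
    intro n z hz
    have hK : (0:ℝ) < 1 / (2 * ρ * q n) := by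
      have := hq0 n; positivity
    have := quad_deriv_bound (hρqpos n) hK (hudiff n) (hquad n) z (by rwa [← hr2eq n])
    have heq : 1 / (2 * ρ * q n) * (ρ * q n) / 2 = 1 / 4 := by
      have habs : ∀ a : ℝ, a ≠ 0 → 1 / (2 * a) * a / 2 = 1 / 4 := by
        intro a ha; field_simp; ring
      have h2 : 2 * ρ * q n = 2 * (ρ * q n) := by ring
      rw [h2]
      exact habs _ (hρqpos n).ne'
    rwa [heq] at this
  -- approximation property
  have happrox : ∀ n : ℕ, ∀ x ∈ Metric.closedBall (0:ℂ) (2 * c * q n),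
      ∀ y ∈ Metric.closedBall (0:ℂ) (2 * c * q n),
      ‖ψ n x - ψ n y - (x - y)‖ ≤ 1 / 4 * ‖x - y‖ := by
    intro n x hx y hy
    have hder : ∀ w ∈ Metric.closedBall (0:ℂ) (2 * c * q n),
        HasDerivWithinAt (u n) (deriv (u n) w) (Metric.closedBall (0:ℂ) (2 * c * q n)) w := by
      intro w hw
      exact (((hudiff n).differentiableAt
        (Metric.isOpen_ball.mem_nhds (hsubcb n hw))).hasDerivAt).hasDerivWithinAt
    have hmvt := Convex.norm_image_sub_le_of_norm_hasDerivWithin_le hder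
      (fun w hw => hu'bound n w hw) (convex_closedBall _ _) hy hx
    have heq : ψ n x - ψ n y - (x - y) = u n x - u n y := by
      show x + u n x - (y + u n y) - (x - y) = u n x - u n y
      ring
    rw [heq]
    exact hmvt
  -- ApproximatesLinearOn structure
  have halo : ∀ n : ℕ, ApproximatesLinearOn (ψ n)
      ((ContinuousLinearEquiv.refl ℂ ℂ : ℂ ≃L[ℂ] ℂ) : ℂ →L[ℂ] ℂ)
      (Metric.closedBall 0 (2 * c * q n)) (1/4 : NNReal) := by
    intro n
    refine fun x hx y hy => ?_
    have h := happrox n x hx y hy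
    have h1 : ((ContinuousLinearEquiv.refl ℂ ℂ : ℂ ≃L[ℂ] ℂ) : ℂ →L[ℂ] ℂ) (x - y) = x - y := rfl
    rw [h1]
    have h2 : ((1/4 : NNReal) : ℝ) = 1/4 := by norm_num
    rw [h2]
    exact h
  have hN : ‖(((ContinuousLinearEquiv.refl ℂ ℂ).symm : ℂ ≃L[ℂ] ℂ) : ℂ →L[ℂ] ℂ)‖₊ = 1 := by
    rw [ContinuousLinearEquiv.refl_symm]
    exact ContinuousLinearMap.nnnorm_id
  have hinjψ : ∀ n : ℕ, Set.InjOn (ψ n) (Metric.closedBall 0 (2 * c * q n)) := by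
    intro n
    apply (halo n).injOn
    right
    rw [hN, inv_one]
    exact NNReal.coe_lt_coe.1 (by norm_num)
  have hsurjψ : ∀ n : ℕ, Set.SurjOn (ψ n) (Metric.closedBall 0 (2 * c * q n))
      (Metric.closedBall (0:ℂ) (c * q n)) := by
    intro n
    have hsurj := (halo n).surjOn_closedBall_of_nonlinearRightInverse
      ((ContinuousLinearEquiv.refl ℂ ℂ).toNonlinearRightInverse) (hr2pos n).le
      (subset_refl _)
    have hnn : (((ContinuousLinearEquiv.refl ℂ ℂ).toNonlinearRightInverse).nnnorm : ℝ) = 1 := by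
      have : ((ContinuousLinearEquiv.refl ℂ ℂ).toNonlinearRightInverse).nnnorm
          = ‖(((ContinuousLinearEquiv.refl ℂ ℂ).symm : ℂ ≃L[ℂ] ℂ) : ℂ →L[ℂ] ℂ)‖₊ := rfl
      rw [this, hN]
      norm_num
    intro y hy
    apply hsurj
    rw [hψ0 n]
    rw [hnn]
    have hc4 : ((1/4 : NNReal) : ℝ) = 1/4 := by norm_num
    rw [hc4]
    rw [Metric.mem_closedBall] at hy ⊢
    have hq := hq0 n
    calc dist y 0 ≤ c * q n := hy
      _ ≤ (1⁻¹ - 1/4) * (2 * c * q n) := by nlinarith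
  set η : ℕ → ℂ → ℂ := fun n => Function.invFunOn (ψ n) (Metric.closedBall 0 (2 * c * q n))
    with hηdef
  have hηspec : ∀ n : ℕ, ∀ z ∈ Metric.ball (0:ℂ) (c * q n),
      η n z ∈ Metric.closedBall (0:ℂ) (2 * c * q n) ∧ ψ n (η n z) = z := by
    intro n z hz
    have hzc : z ∈ Metric.closedBall (0:ℂ) (c * q n) := Metric.ball_subset_closedBall hz
    have himg := hsurjψ n hzc
    rw [Set.mem_image] at himg
    obtain ⟨x, hx, hxz⟩ := himg
    have hex : ∃ x ∈ Metric.closedBall (0:ℂ) (2 * c * q n), ψ n x = z := ⟨x, hx, hxz⟩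
    exact ⟨Function.invFunOn_mem hex, Function.invFunOn_eq hex⟩
  have hη0 : ∀ n : ℕ, η n 0 = 0 := by
    intro n
    have h0 : (0:ℂ) ∈ Metric.ball (0:ℂ) (c * q n) := by
      rw [Metric.mem_ball, dist_self]
      exact mul_pos hcpos (hq0 n)
    have hspec := hηspec n 0 h0
    apply hinjψ n hspec.1 (Metric.mem_closedBall_self (hr2pos n).le)
    rw [hspec.2, hψ0 n]
  have hηnorm : ∀ n : ℕ, ∀ z ∈ Metric.ball (0:ℂ) (c * q n), ‖η n z‖ ≤ 4/3 * ‖z‖ := by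
    intro n z hz
    obtain ⟨hmem, heq⟩ := hηspec n z hz
    have h0 : (0:ℂ) ∈ Metric.closedBall (0:ℂ) (2 * c * q n) :=
      Metric.mem_closedBall_self (hr2pos n).le
    have := happrox n (η n z) hmem 0 h0
    rw [heq, hψ0 n] at this
    simp only [sub_zero] at this
    have h1 : ‖η n z‖ - ‖z‖ ≤ ‖z - η n z‖ := by
      have := norm_sub_norm_le (η n z) z
      have h2 : ‖η n z - z‖ = ‖z - η n z‖ := norm_sub_rev _ _
      linarith
    linarith [this, h1]
  have hηlip : ∀ n : ℕ, ∀ z ∈ Metric.ball (0:ℂ) (c * q n), ∀ z' ∈ Metric.ball (0:ℂ) (c * q n),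
      ‖η n z - η n z'‖ ≤ 2 * ‖z - z'‖ := by
    intro n z hz z' hz'
    obtain ⟨hmem, heq⟩ := hηspec n z hz
    obtain ⟨hmem', heq'⟩ := hηspec n z' hz'
    have := happrox n (η n z) hmem (η n z') hmem'
    rw [heq, heq'] at this
    have h1 : ‖η n z - η n z'‖ - ‖z - z'‖ ≤ ‖z - z' - (η n z - η n z')‖ := by
      have h2 := norm_sub_norm_le (η n z - η n z') (z - z')
      have h3 : ‖η n z - η n z' - (z - z')‖ = ‖z - z' - (η n z - η n z')‖ := norm_sub_rev _ _
      linarith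
    linarith [this, h1, norm_nonneg (z - z')]
  have hηcont : ∀ n : ℕ, ContinuousOn (η n) (Metric.ball (0:ℂ) (c * q n)) := by
    intro n
    apply LipschitzOnWith.continuousOn (K := 2)
    apply LipschitzOnWith.of_dist_le_mul
    intro x hx y hy
    rw [dist_eq_norm, dist_eq_norm]
    have := hηlip n x hx y hy
    calc ‖η n x - η n y‖ ≤ 2 * ‖x - y‖ := this
      _ = (2 : NNReal) * ‖x - y‖ := by norm_num
  -- derivative facts for ψ
  have hψder : ∀ n : ℕ, ∀ w ∈ Metric.closedBall (0:ℂ) (2 * c * q n),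
      HasDerivAt (ψ n) (1 + deriv (u n) w) w := by
    intro n w hw
    have hud : HasDerivAt (u n) (deriv (u n) w) w :=
      ((hudiff n).differentiableAt (Metric.isOpen_ball.mem_nhds (hsubcb n hw))).hasDerivAt
    exact (hasDerivAt_id w).add hud
  have hψdne : ∀ n : ℕ, ∀ w ∈ Metric.closedBall (0:ℂ) (2 * c * q n),
      (1 : ℂ) + deriv (u n) w ≠ 0 := by
    intro n w hw h
    have h1 : deriv (u n) w = -1 := by linear_combination h
    have h2 := hu'bound n w hw
    rw [h1] at h2
    norm_num at h2
  have hηderiv : ∀ n : ℕ, ∀ a ∈ Metric.ball (0:ℂ) (c * q n),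
      HasDerivAt (η n) (1 + deriv (u n) (η n a))⁻¹ a := by
    intro n a ha
    obtain ⟨hmem, _⟩ := hηspec n a ha
    apply HasDerivAt.of_local_left_inverse
      ((hηcont n).continuousAt (Metric.isOpen_ball.mem_nhds ha))
      (hψder n _ hmem) (hψdne n _ hmem)
    filter_upwards [Metric.isOpen_ball.mem_nhds ha] with y hy
    exact (hηspec n y hy).2
  -- derivative of ψ at 0 is 1
  have hu0deriv : ∀ n : ℕ, deriv (u n) 0 = 0 := by
    intro n
    have hK : (0:ℝ) < 1 / (2 * ρ * q n) := by have := hq0 n; positivity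
    exact (quad_hasDerivAt_zero (hρqpos n) hK (hquad n)).deriv
  -- one-step image bound
  have hF1 : ∀ n : ℕ, ∀ w : ℂ, ‖w‖ < ρ * q n → ‖F n w‖ ≤ Real.exp (lam + 2 * ε) * ‖w‖ := by
    intro n w hw
    have h := horbit n w hw 1
    have h1 : Φ n 1 w = F (n + 0) w := rfl
    rw [Nat.add_zero] at h1
    rw [h1] at h
    simpa using h
  -- ## Assembly
  have hqstep : ∀ n : ℕ, q n ≤ Real.exp ε * q (n + 1) := by
    intro n
    have := hqdown n 1
    simpa using this
  have hexp2le : Real.exp (lam + 2 * ε) ≤ 1 := Real.exp_le_one_iff.2 (by linarith)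
  have hexp3le : Real.exp (lam + 3 * ε) ≤ 1 := Real.exp_le_one_iff.2 (by linarith)
  -- the linear image stays in the smaller disk
  have hmz : ∀ n : ℕ, ∀ z ∈ Metric.ball (0:ℂ) (c * q n),
      m n * z ∈ Metric.ball (0:ℂ) (c * q (n + 1)) := by
    intro n z hz
    rw [mem_ball_iff_norm, sub_zero] at hz ⊢
    have hq1' := hqstep n
    have h1 : ‖m n * z‖ ≤ Real.exp (lam + ε) * ‖z‖ := by
      rw [norm_mul]
      exact mul_le_mul_of_nonneg_right (hmu n) (norm_nonneg _)
    have h2 : Real.exp (lam + ε) * ‖z‖ < Real.exp (lam + ε) * (c * q n) :=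
      mul_lt_mul_of_pos_left hz (Real.exp_pos _)
    have h3 : Real.exp (lam + ε) * (c * q n) ≤ Real.exp (lam + ε) * (c * (Real.exp ε * q (n+1))) := by
      apply mul_le_mul_of_nonneg_left _ (Real.exp_pos _).le
      exact mul_le_mul_of_nonneg_left hq1' hcpos.le
    have h4 : Real.exp (lam + ε) * (c * (Real.exp ε * q (n+1)))
        = Real.exp (lam + 2 * ε) * (c * q (n+1)) := by
      have hee : Real.exp (lam + ε) * Real.exp ε = Real.exp (lam + 2 * ε) := by
        rw [← Real.exp_add]; ring_nf
      rw [← hee]; ring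
    have h5 : Real.exp (lam + 2 * ε) * (c * q (n+1)) ≤ 1 * (c * q (n+1)) := by
      apply mul_le_mul_of_nonneg_right hexp2le
      exact mul_nonneg hcpos.le (hq0 _).le
    calc ‖m n * z‖ ≤ Real.exp (lam + ε) * ‖z‖ := h1
      _ < Real.exp (lam + ε) * (c * q n) := h2
      _ ≤ Real.exp (lam + ε) * (c * (Real.exp ε * q (n+1))) := h3
      _ = Real.exp (lam + 2 * ε) * (c * q (n+1)) := h4
      _ ≤ 1 * (c * q (n+1)) := h5
      _ = c * q (n+1) := one_mul _
  refine ⟨η, ?_, ?_, ?_, hη0, ?_, ?_⟩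
  · -- injectivity
    intro n a ha b hb hab
    have h1 := (hηspec n a ha).2
    have h2 := (hηspec n b hb).2
    rw [← h1, ← h2, hab]
  · -- differentiability
    intro n a ha
    exact ((hηderiv n a ha).differentiableAt).differentiableWithinAt
  · -- maps to
    intro n z hz
    have h1 := hηnorm n z hz
    have hz2 := hz
    rw [mem_ball_iff_norm, sub_zero] at hz2
    rw [mem_ball_iff_norm, sub_zero]
    have hq := hq0 n
    nlinarith [norm_nonneg z, hc24, hcpos]
  · -- derivative at 0
    intro n
    have h0 : (0:ℂ) ∈ Metric.ball (0:ℂ) (c * q n) := by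
      rw [Metric.mem_ball, dist_self]
      exact mul_pos hcpos (hq0 n)
    have h := (hηderiv n 0 h0).deriv
    rw [hη0 n, hu0deriv n] at h
    simpa using h
  · -- conjugation
    intro n z hz
    refine ⟨hmz n z hz, ?_⟩
    have hz' : ‖z‖ < c * q n := by
      have h0 := hz
      rwa [mem_ball_iff_norm, sub_zero] at h0
    obtain ⟨hwcb, hψw⟩ := hηspec n z hz
    have hwlt : ‖η n z‖ < 4/3 * (c * q n) := by
      have h1 := hηnorm n z hz
      nlinarith
    have hwρ : ‖η n z‖ < ρ * q n := by
      rw [hcρ] at hwlt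
      nlinarith [hq0 n, hρpos]
    have hFw1 : ‖F n (η n z)‖ ≤ Real.exp (lam + 2 * ε) * ‖η n z‖ := hF1 n (η n z) hwρ
    have hFwlt : ‖F n (η n z)‖ < 4/3 * (c * q (n + 1)) := by
      have h2 : Real.exp (lam + 2 * ε) * ‖η n z‖
          < Real.exp (lam + 2 * ε) * (4/3 * (c * q n)) :=
        mul_lt_mul_of_pos_left hwlt (Real.exp_pos _)
      have h3 : Real.exp (lam + 2 * ε) * (4/3 * (c * q n))
          ≤ Real.exp (lam + 2 * ε) * (4/3 * (c * (Real.exp ε * q (n+1)))) := by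
        apply mul_le_mul_of_nonneg_left _ (Real.exp_pos _).le
        have := hqstep n
        nlinarith [hcpos]
      have h4 : Real.exp (lam + 2 * ε) * (4/3 * (c * (Real.exp ε * q (n+1))))
          = Real.exp (lam + 3 * ε) * (4/3 * (c * q (n+1))) := by
        have hee : Real.exp (lam + 2 * ε) * Real.exp ε = Real.exp (lam + 3 * ε) := by
          rw [← Real.exp_add]; ring_nf
        rw [← hee]; ring
      have h5 : Real.exp (lam + 3 * ε) * (4/3 * (c * q (n+1))) ≤ 1 * (4/3 * (c * q (n+1))) := by
        apply mul_le_mul_of_nonneg_right hexp3le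
        nlinarith [mul_pos hcpos (hq0 (n+1))]
      calc ‖F n (η n z)‖ ≤ Real.exp (lam + 2 * ε) * ‖η n z‖ := hFw1
        _ < Real.exp (lam + 2 * ε) * (4/3 * (c * q n)) := h2
        _ ≤ Real.exp (lam + 2 * ε) * (4/3 * (c * (Real.exp ε * q (n+1)))) := h3
        _ = Real.exp (lam + 3 * ε) * (4/3 * (c * q (n+1))) := h4
        _ ≤ 1 * (4/3 * (c * q (n+1))) := h5
        _ = 4/3 * (c * q (n+1)) := one_mul _
    have hFwcb : F n (η n z) ∈ Metric.closedBall (0:ℂ) (2 * c * q (n + 1)) := by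
      rw [Metric.mem_closedBall, dist_zero_right]
      have := hq0 (n+1)
      nlinarith [hcpos]
    have hFwρb : ‖F n (η n z)‖ < ρ * q (n + 1) := by
      rw [hcρ] at hFwlt
      nlinarith [hq0 (n+1), hρpos]
    have hfeq : ψ (n + 1) (F n (η n z)) = m n * z := by
      rw [hfe n (η n z) hwρ hFwρb, hψw]
    obtain ⟨hxcb, hψx⟩ := hηspec (n + 1) (m n * z) (hmz n z hz)
    apply hinjψ (n + 1) hFwcb hxcb
    rw [hfeq, hψx]
end

section
/- Let λ < 0 and ε > 0 satisfy λ + 3ε ≤ 0 and e^{λ}·(e^ε − 1) ≤ 1. Let q, q' > 0 with e^{−ε}·q ≤ q' ≤ e^{ε}·q, and let F : D(q) → ℂ be holomorphic with F(z) ∈ D(q') for all z ∈ D(q), F(0) = 0 and |F'(0)| ≤ e^{λ+ε}. Set q'' := (e^{λ}(e^ε − 1)/2)·q and q''' := (e^{λ}(e^ε − 1)/2)·q'. Then for every z ∈ D(q''), |F(z)| ≤ e^{λ+2ε}·|z|; in particular F(D(q'')) ⊆ D(e^{λ+2ε}·q'') ⊆ D(q'''). -/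
/-- **Contraction estimate and disk invariance.** Under the hypotheses of the
linearization proposition, on the rescaled disk `D(q'')` one has
`|F z| ≤ e^{λ+2ε} |z|`; in particular `F(D(q'')) ⊆ D(e^{λ+2ε} q'') ⊆ D(q''')`. -/
theorem contraction_estimate
    (lam ε : ℝ) (hlam : lam < 0) (hε : 0 < ε)
    (h3 : lam + 3 * ε ≤ 0) (hcond : Real.exp lam * (Real.exp ε - 1) ≤ 1)
    (q q' : ℝ) (hq : 0 < q) (hq' : 0 < q')
    (hq1 : Real.exp (-ε) * q ≤ q') (hq2 : q' ≤ Real.exp ε * q)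
    (F : ℂ → ℂ) (hFhol : DifferentiableOn ℂ F (Metric.ball 0 q))
    (hFmaps : ∀ z ∈ Metric.ball (0 : ℂ) q, F z ∈ Metric.ball (0 : ℂ) q')
    (hF0 : F 0 = 0)
    (hmup : ‖deriv F 0‖ ≤ Real.exp (lam + ε))
    (q'' q''' : ℝ)
    (hq'' : q'' = Real.exp lam * (Real.exp ε - 1) / 2 * q)
    (hq''' : q''' = Real.exp lam * (Real.exp ε - 1) / 2 * q') :
    (∀ z ∈ Metric.ball (0 : ℂ) q'',
        ‖F z‖ ≤ Real.exp (lam + 2 * ε) * ‖z‖) ∧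
    Set.MapsTo F (Metric.ball 0 q'') (Metric.ball 0 (Real.exp (lam + 2 * ε) * q'')) ∧
    Metric.ball (0 : ℂ) (Real.exp (lam + 2 * ε) * q'') ⊆ Metric.ball (0 : ℂ) q''' := by
  have hexpe : 1 < Real.exp ε := by
    rw [show (1:ℝ) = Real.exp 0 by simp]; exact Real.exp_lt_exp.2 hε
  have hC : 0 < Real.exp lam * (Real.exp ε - 1) := by
    have := Real.exp_pos lam; nlinarith
  have hq''pos : 0 < q'' := by rw [hq'']; nlinarith
  have hq''lt : q'' < q := by rw [hq'']; nlinarith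
  set g := dslope F 0 with hg
  have hball : Metric.ball (0:ℂ) q ∈ nhds (0:ℂ) := Metric.ball_mem_nhds 0 hq
  have hgdiff : DifferentiableOn ℂ g (Metric.ball 0 q) :=
    (Complex.differentiableOn_dslope hball).mpr hFhol
  have hFmaps' : Set.MapsTo F (Metric.ball 0 q) (Metric.ball (F 0) q') := by
    rw [hF0]; exact hFmaps
  have hgbound : ∀ w ∈ Metric.ball (0:ℂ) q, ‖g w‖ ≤ q' / q := fun w hw =>
    Complex.norm_dslope_le_div_of_mapsTo_ball hFhol (hFmaps'.mono_right Metric.ball_subset_closedBall) hw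
  have hg0 : g 0 = deriv F 0 := dslope_same F 0
  -- second-order Schwarz estimate
  have hgslope : ∀ z ∈ Metric.ball (0:ℂ) q,
      dist (g z) (g 0) ≤ (2 * q' / q) / q * ‖z‖ := by
    intro z hz
    rcases eq_or_ne z 0 with rfl | hz0
    · simp
    have habs : (0:ℝ) < ‖z‖ := norm_pos_iff.mpr hz0
    refine le_of_forall_pos_le_add ?_
    intro e he
    have hmaps2 : Set.MapsTo g (Metric.ball 0 q)
        (Metric.ball (g 0) (2 * q' / q + e * q / ‖z‖)) := by
      intro w hw
      have h1 := hgbound w hw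
      have h2 := hgbound 0 (Metric.mem_ball_self hq)
      have hdd : dist (g w) (g 0) ≤ 2 * q' / q := by
        have hsum : q' / q + q' / q = 2 * q' / q := by ring
        have := dist_le_norm_add_norm (g w) (g 0)
        linarith
      have hpos : (0:ℝ) < e * q / ‖z‖ := by positivity
      exact Metric.mem_ball.2 (lt_of_le_of_lt hdd (by linarith))
    have hkey := Complex.dist_le_div_mul_dist_of_mapsTo_ball hgdiff (hmaps2.mono_right Metric.ball_subset_closedBall) hz
    have hdz : dist z (0:ℂ) = ‖z‖ := by simp [Complex.dist_eq]
    rw [hdz] at hkey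
    calc dist (g z) (g 0)
        ≤ (2 * q' / q + e * q / ‖z‖) / q * ‖z‖ := hkey
      _ = (2 * q' / q) / q * ‖z‖ + e := by field_simp
  -- main pointwise estimate
  have key : ∀ z ∈ Metric.ball (0:ℂ) q'',
      ‖F z‖ ≤ Real.exp (lam + 2 * ε) * ‖z‖ := by
    intro z hz
    rcases eq_or_ne z 0 with rfl | hz0
    · simp [hF0]
    have hzq'' : ‖z‖ < q'' := by
      simpa [Complex.dist_eq] using Metric.mem_ball.1 hz
    have habs : (0:ℝ) < ‖z‖ := norm_pos_iff.mpr hz0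
    have hzq : z ∈ Metric.ball (0:ℂ) q := by
      rw [Metric.mem_ball]
      simp only [dist_zero_right]
      linarith
    have hgz : ‖F z‖ = ‖z‖ * ‖g z‖ := by
      have hFz : F z = z * g z := by
        rw [hg, dslope_of_ne _ hz0, slope_def_module]
        rw [hF0]
        rw [smul_eq_mul, sub_zero, sub_zero]
        field_simp
      rw [hFz, norm_mul]
    have h1 : ‖g z‖ ≤ ‖g 0‖ + (2 * q' / q) / q * ‖z‖ := by
      have hgs := hgslope z hzq
      have hd : dist (g z) (g 0) = ‖g z - g 0‖ := Complex.dist_eq _ _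
      have htr : ‖g z‖ ≤ ‖g z - g 0‖ + ‖g 0‖ := by
        simpa using norm_add_le (g z - g 0) (g 0)
      rw [hd] at hgs; linarith
    have hg0' : ‖g 0‖ ≤ Real.exp (lam + ε) := by rw [hg0]; exact hmup
    have hE : Real.exp (lam + ε) = Real.exp lam * Real.exp ε := Real.exp_add _ _
    have h2 : (2 * q' / q) / q * ‖z‖ ≤ Real.exp (lam + ε) * (Real.exp ε - 1) := by
      rw [div_div, div_mul_eq_mul_div, div_le_iff₀ (by positivity : (0:ℝ) < q * q), hE]
      have hz' : ‖z‖ ≤ Real.exp lam * (Real.exp ε - 1) / 2 * q := by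
        rw [← hq'']; exact le_of_lt hzq''
      have hprod : q' * ‖z‖ ≤
          (Real.exp ε * q) * (Real.exp lam * (Real.exp ε - 1) / 2 * q) :=
        mul_le_mul hq2 hz' habs.le (by positivity)
      nlinarith [Real.exp_pos lam, Real.exp_pos ε]
    have h3' : Real.exp (lam + 2 * ε) = Real.exp (lam + ε) * Real.exp ε := by
      rw [← Real.exp_add]; ring_nf
    have hbound : ‖g z‖ ≤ Real.exp (lam + ε) * Real.exp ε := by
      nlinarith
    rw [hgz, h3']
    calc ‖z‖ * ‖g z‖
        ≤ ‖z‖ * (Real.exp (lam + ε) * Real.exp ε) :=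
          mul_le_mul_of_nonneg_left hbound habs.le
      _ = Real.exp (lam + ε) * Real.exp ε * ‖z‖ := by ring
  refine ⟨key, ?_, ?_⟩
  · intro z hz
    have hb := key z hz
    have hzq'' : ‖z‖ < q'' := by
      simpa [Complex.dist_eq] using Metric.mem_ball.1 hz
    have hE : 0 < Real.exp (lam + 2 * ε) := Real.exp_pos _
    rw [Metric.mem_ball]
    simp only [dist_zero_right]
    calc ‖F z‖ ≤ Real.exp (lam + 2 * ε) * ‖z‖ := hb
      _ < Real.exp (lam + 2 * ε) * q'' := mul_lt_mul_of_pos_left hzq'' hE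
  · apply Metric.ball_subset_ball
    rw [hq'', hq''']
    have h1 : Real.exp (lam + 2 * ε) ≤ Real.exp (-ε) := by
      apply Real.exp_le_exp.2; linarith
    have hkey : Real.exp (lam + 2 * ε) * q ≤ q' :=
      le_trans (mul_le_mul_of_nonneg_right h1 hq.le) hq1
    nlinarith
end

section
/- Let λ < 0 and ε > 0 with λ + 6ε < 0 and e^{λ}·(e^ε − 1) ≤ 1. Let (q_n)_{n≥0} be positive reals with e^{−ε}·q_n ≤ q_{n+1} ≤ e^{ε}·q_n, and for each n let F_n : D(q_n) → D(q_{n+1}) be holomorphic with F_n(0) = 0 and m_n := F_n'(0) satisfying e^{λ−ε} ≤ |m_n| ≤ e^{λ+ε}. Set q'_n := (e^{λ}(e^ε − 1)/2)·q_n and Q_n := 2·e^{−λ+2ε}/q_n. For m ≥ 0 define η̃_{m,n} on D(q'_n) by η̃_{0,n}(z) := z and η̃_{m,n}(z) := (F_{n+m−1} ∘ ⋯ ∘ F_n)(z) / (m_n·m_{n+1}·⋯·m_{n+m−1}); these maps are well defined because F_k(D(q'_k)) ⊆ D(q'_{k+1}) for all k. Then for all n ≥ 0, m ≥ 0 and z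 ∈ D(q'_n): |η̃_{m+1,n}(z) − η̃_{m,n}(z)| ≤ e^{m(λ+6ε)}·|z|²·Q_n. -/
open Metric

lemma quad_bound {G : ℂ → ℂ} {r r1 : ℝ} (hr : 0 < r)
    (hhol : DifferentiableOn ℂ G (ball 0 r))
    (hmaps : Set.MapsTo G (ball 0 r) (ball 0 r1))
    (hG0 : G 0 = 0) {z : ℂ} (hz : z ∈ ball 0 r) :
    ‖G z - deriv G 0 * z‖
      ≤ (r1 / r + ‖deriv G 0‖) / r * ‖z‖ ^ 2 := by
  set d := deriv G 0 with hd
  have key : ∀ δ : ℝ, 0 < δ → ‖G z - d * z‖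
      ≤ (r1 / r + ‖d‖ + δ) / r * ‖z‖ ^ 2 := by
    intro δ hδ
    set H := dslope G 0 with hH
    have hHd : DifferentiableOn ℂ H (ball 0 r) :=
      (Complex.differentiableOn_dslope (isOpen_ball.mem_nhds (mem_ball_self hr))).mpr hhol
    have hH0 : H 0 = d := dslope_same G 0
    have hHb : ∀ w ∈ ball 0 r, ‖H w‖ ≤ r1 / r := by
      intro w hw
      have := Complex.norm_dslope_le_div_of_mapsTo_ball hhol ((by rwa [hG0] : Set.MapsTo G (ball 0 r) (ball (G 0) r1)).mono_right ball_subset_closedBall) hw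
      simpa using this
    have hmapsH : Set.MapsTo H (ball 0 r) (ball (H 0) (r1 / r + ‖d‖ + δ)) := by
      intro w hw
      rw [mem_ball, hH0, Complex.dist_eq]
      calc ‖H w - d‖ ≤ ‖H w‖ + ‖d‖ := by
            simpa [sub_eq_add_neg] using norm_add_le (H w) (-d)
        _ ≤ r1 / r + ‖d‖ := by linarith [hHb w hw]
        _ < r1 / r + ‖d‖ + δ := by linarith
    have h2 := Complex.norm_dslope_le_div_of_mapsTo_ball hHd (hmapsH.mono_right ball_subset_closedBall) hz
    rcases eq_or_ne z 0 with rfl | hz0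
    · simp [hG0]
    · have hHz : H z = G z / z := by
        rw [hH, dslope_of_ne _ hz0, slope_def_field, hG0]
        simp
      have hgz : G z - d * z = z ^ 2 * dslope H 0 z := by
        rw [dslope_of_ne _ hz0, slope_def_field, hHz, hH0]
        field_simp
        ring
      calc ‖G z - d * z‖ = ‖z‖ ^ 2 * ‖dslope H 0 z‖ := by
            rw [hgz, norm_mul, norm_pow]
        _ ≤ ‖z‖ ^ 2 * ((r1 / r + ‖d‖ + δ) / r) := by
            apply mul_le_mul_of_nonneg_left h2 (by positivity)
        _ = (r1 / r + ‖d‖ + δ) / r * ‖z‖ ^ 2 := by ring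
  apply le_of_forall_pos_le_add
  intro e he
  rcases eq_or_ne z 0 with rfl | hz0
  · have : ‖G 0 - d * 0‖ = 0 := by simp [hG0]
    rw [this]
    have : 0 ≤ (r1 / r + ‖d‖) / r * ‖(0 : ℂ)‖ ^ 2 := by
      simp
    linarith
  · have habs : 0 < ‖z‖ ^ 2 := by
      have := norm_pos_iff.mpr hz0
      positivity
    have := key (e * r / ‖z‖ ^ 2) (by positivity)
    have heq : (r1 / r + ‖d‖ + e * r / ‖z‖ ^ 2) / r * ‖z‖ ^ 2
        = (r1 / r + ‖d‖) / r * ‖z‖ ^ 2 + e := by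
      field_simp
    linarith [this, heq ▸ this]


/-- The composition `F_{n+m-1} ∘ ⋯ ∘ F_n` (equal to the identity when `m = 0`). -/
noncomputable def compChain (F : ℕ → ℂ → ℂ) : ℕ → ℕ → ℂ → ℂ
  | 0, _, z => z
  | m + 1, n, z => compChain F m (n + 1) (F n z)

/-- The renormalized compositions
`η̃_{m,n}(z) = (F_{n+m-1} ∘ ⋯ ∘ F_n)(z) / (m_n ⋯ m_{n+m-1})`. -/
noncomputable def etaTilde (F : ℕ → ℂ → ℂ) (m : ℕ → ℂ) (k n : ℕ) (z : ℂ) : ℂ :=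
  compChain F k n z / ∏ i ∈ Finset.range k, m (n + i)

/-- **Telescoping estimate.** For all `n`, `k` and `z ∈ D(q'_n)`,
`|η̃_{k+1,n}(z) − η̃_{k,n}(z)| ≤ e^{k(λ+6ε)} |z|² Q_n`. -/
theorem etaTilde_telescoping_estimate
    (lam ε : ℝ) (hlam : lam < 0) (hε : 0 < ε) (h6 : lam + 6 * ε < 0)
    (hcond : Real.exp lam * (Real.exp ε - 1) ≤ 1)
    (q : ℕ → ℝ) (hq0 : ∀ n, 0 < q n)
    (hqtemp : ∀ n, Real.exp (-ε) * q n ≤ q (n + 1) ∧ q (n + 1) ≤ Real.exp ε * q n)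
    (F : ℕ → ℂ → ℂ)
    (hFhol : ∀ n, DifferentiableOn ℂ (F n) (Metric.ball 0 (q n)))
    (hFmaps : ∀ n, Set.MapsTo (F n) (Metric.ball 0 (q n)) (Metric.ball 0 (q (n + 1))))
    (hF0 : ∀ n, F n 0 = 0)
    (m : ℕ → ℂ) (hm : ∀ n, m n = deriv (F n) 0)
    (hmlow : ∀ n, Real.exp (lam - ε) ≤ ‖m n‖)
    (hmup : ∀ n, ‖m n‖ ≤ Real.exp (lam + ε))
    (q' : ℕ → ℝ) (hq' : ∀ n, q' n = Real.exp lam * (Real.exp ε - 1) / 2 * q n)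
    (Q : ℕ → ℝ) (hQ : ∀ n, Q n = 2 * Real.exp (-lam + 2 * ε) / q n) :
    ∀ n k : ℕ, ∀ z ∈ Metric.ball (0 : ℂ) (q' n),
      ‖etaTilde F m (k + 1) n z - etaTilde F m k n z‖ ≤
        Real.exp ((k : ℝ) * (lam + 6 * ε)) * ‖z‖ ^ 2 * Q n := by
  have hexp1 : (1 : ℝ) < Real.exp ε := by
    simpa using Real.exp_lt_exp.mpr hε
  have hc0 : 0 < Real.exp lam * (Real.exp ε - 1) / 2 := by
    have := Real.exp_pos lam; nlinarith
  -- q' facts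
  have hq'0 : ∀ n, 0 < q' n := fun n => by rw [hq' n]; exact mul_pos hc0 (hq0 n)
  have hq'le : ∀ n, q' n ≤ q n := fun n => by
    rw [hq' n]
    nlinarith [hq0 n, hcond, (hq0 n).le]
  have hball : ∀ n, Metric.ball (0 : ℂ) (q' n) ⊆ Metric.ball 0 (q n) :=
    fun n => Metric.ball_subset_ball (hq'le n)
  have habs_mem : ∀ n, ∀ z : ℂ, z ∈ Metric.ball (0 : ℂ) (q' n) → ‖z‖ < q' n := by
    intro n z hz
    simpa [Metric.mem_ball, Complex.dist_eq] using hz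
  -- L1 : quadratic bound
  have L1 : ∀ n, ∀ z ∈ Metric.ball (0 : ℂ) (q n),
      ‖F n z - m n * z‖ ≤ 2 * Real.exp ε / q n * ‖z‖ ^ 2 := by
    intro n z hz
    have h := quad_bound (hq0 n) (hFhol n) (hFmaps n) (hF0 n) hz
    rw [← hm n] at h
    refine h.trans ?_
    have h1 : q (n + 1) / q n ≤ Real.exp ε := by
      rw [div_le_iff₀ (hq0 n)]
      linarith [(hqtemp n).2]
    have h2 : ‖m n‖ ≤ Real.exp ε := by
      refine (hmup n).trans ?_
      exact Real.exp_le_exp.mpr (by linarith)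
    have : (q (n + 1) / q n + ‖m n‖) / q n ≤ 2 * Real.exp ε / q n :=
      div_le_div₀ (by positivity) (by linarith) (hq0 n) le_rfl
    exact mul_le_mul_of_nonneg_right this (by positivity)
  -- L2 : Lipschitz-type bound on the small disk
  have L2 : ∀ n, ∀ z ∈ Metric.ball (0 : ℂ) (q' n),
      ‖F n z‖ ≤ Real.exp (lam + 2 * ε) * ‖z‖ := by
    intro n z hz
    have hzq := habs_mem n z hz
    have h1 := L1 n z (hball n hz)
    have htri : ‖F n z‖ ≤ ‖F n z - m n * z‖ + ‖m n * z‖ := by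
      simpa using norm_add_le (F n z - m n * z) (m n * z)
    have h2 : ‖m n * z‖ ≤ Real.exp (lam + ε) * ‖z‖ := by
      rw [norm_mul]
      exact mul_le_mul_of_nonneg_right (hmup n) (norm_nonneg z)
    have h3 : 2 * Real.exp ε / q n * ‖z‖ ^ 2
        ≤ Real.exp ε * (Real.exp lam * (Real.exp ε - 1)) * ‖z‖ := by
      have hzn : 0 ≤ ‖z‖ := norm_nonneg z
      have : ‖z‖ ^ 2 ≤ (Real.exp lam * (Real.exp ε - 1) / 2 * q n) * ‖z‖ := by
        rw [pow_two]
        apply mul_le_mul_of_nonneg_right _ hzn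
        rw [← hq' n]; exact hzq.le
      calc 2 * Real.exp ε / q n * ‖z‖ ^ 2
          ≤ 2 * Real.exp ε / q n * ((Real.exp lam * (Real.exp ε - 1) / 2 * q n) * ‖z‖) := by
            refine mul_le_mul_of_nonneg_left this ?_
            have hqn := hq0 n
            positivity
        _ = Real.exp ε * (Real.exp lam * (Real.exp ε - 1)) * ‖z‖ := by
            have hqn : q n ≠ 0 := (hq0 n).ne'
            field_simp
    have hsum : Real.exp ε * (Real.exp lam * (Real.exp ε - 1)) + Real.exp (lam + ε)
        = Real.exp (lam + 2 * ε) := by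
      rw [show lam + 2 * ε = (lam + ε) + ε by ring, Real.exp_add (lam + ε) ε, Real.exp_add lam ε]
      ring
    calc ‖F n z‖ ≤ ‖F n z - m n * z‖ + ‖m n * z‖ := htri
      _ ≤ Real.exp ε * (Real.exp lam * (Real.exp ε - 1)) * ‖z‖
          + Real.exp (lam + ε) * ‖z‖ := by linarith [h1.trans h3]
      _ = Real.exp (lam + 2 * ε) * ‖z‖ := by rw [← hsum]; ring
  -- L3 : F n maps the small disk into the next small disk
  have L3 : ∀ n, ∀ z ∈ Metric.ball (0 : ℂ) (q' n),
      F n z ∈ Metric.ball (0 : ℂ) (q' (n + 1)) := by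
    intro n z hz
    have hzq := habs_mem n z hz
    rw [Metric.mem_ball, Complex.dist_eq, sub_zero]
    have h1 : ‖F n z‖ < Real.exp (lam + 2 * ε) * q' n := by
      calc ‖F n z‖ ≤ Real.exp (lam + 2 * ε) * ‖z‖ := L2 n z hz
        _ < Real.exp (lam + 2 * ε) * q' n := by
            exact mul_lt_mul_of_pos_left hzq (Real.exp_pos _)
    have h2 : Real.exp (lam + 2 * ε) * q' n ≤ q' (n + 1) := by
      have hstep : Real.exp (lam + 2 * ε) ≤ Real.exp (-ε) :=
        Real.exp_le_exp.mpr (by linarith)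
      have h3 : Real.exp (-ε) * q' n ≤ q' (n + 1) := by
        rw [hq' n, hq' (n + 1)]
        calc Real.exp (-ε) * (Real.exp lam * (Real.exp ε - 1) / 2 * q n)
            = Real.exp lam * (Real.exp ε - 1) / 2 * (Real.exp (-ε) * q n) := by ring
          _ ≤ Real.exp lam * (Real.exp ε - 1) / 2 * q (n + 1) :=
              mul_le_mul_of_nonneg_left (hqtemp n).1 hc0.le
      calc Real.exp (lam + 2 * ε) * q' n ≤ Real.exp (-ε) * q' n :=
            mul_le_mul_of_nonneg_right hstep (hq'0 n).le
        _ ≤ q' (n + 1) := h3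
    linarith
  -- m n ≠ 0
  have hmne : ∀ n, m n ≠ 0 := by
    intro n h
    have := hmlow n
    rw [h] at this
    simp at this
    linarith [Real.exp_pos (lam - ε), this]
  -- recursion for etaTilde
  have hrec : ∀ j n (z : ℂ), etaTilde F m (j + 1) n z = etaTilde F m j (n + 1) (F n z) / m n := by
    intro j n z
    unfold etaTilde
    have hcomp : compChain F (j + 1) n z = compChain F j (n + 1) (F n z) := rfl
    have hprod : ∏ i ∈ Finset.range (j + 1), m (n + i)
        = (∏ i ∈ Finset.range j, m (n + 1 + i)) * m n := by
      rw [Finset.prod_range_succ']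
      have h1 : (∏ i ∈ Finset.range j, m (n + (i + 1))) = ∏ i ∈ Finset.range j, m (n + 1 + i) :=
        Finset.prod_congr rfl fun i _ => by congr 1; omega
      rw [h1]
      simp
    rw [hcomp, hprod, ← div_div]
  intro n k
  induction k generalizing n with
  | zero =>
    intro z hz
    have hone : etaTilde F m 1 n z = F n z / m n := by
      unfold etaTilde
      simp [compChain]
    have hzero : etaTilde F m 0 n z = z := by
      unfold etaTilde
      simp [compChain]
    rw [hone, hzero]
    have hdiff : F n z / m n - z = (F n z - m n * z) / m n := by
      field_simp [hmne n]
    rw [hdiff, norm_div]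
    have hnum := L1 n z (hball n hz)
    have hden := hmlow n
    calc ‖F n z - m n * z‖ / ‖m n‖
        ≤ (2 * Real.exp ε / q n * ‖z‖ ^ 2) / Real.exp (lam - ε) :=
          div_le_div₀ (by have := hq0 n; positivity) hnum (Real.exp_pos _) hden
      _ = Real.exp ((0 : ℕ) * (lam + 6 * ε)) * ‖z‖ ^ 2 * Q n := by
          have e1 : Real.exp (-lam + 2 * ε) = Real.exp ε / Real.exp (lam - ε) := by
            rw [eq_div_iff (Real.exp_pos _).ne', ← Real.exp_add]
            congr 1; ring
          rw [hQ n, e1]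
          have h1 : Real.exp (lam - ε) ≠ 0 := (Real.exp_pos _).ne'
          have h2 : q n ≠ 0 := (hq0 n).ne'
          field_simp
          simp
  | succ k IH =>
    intro z hz
    have hw := L3 n z hz
    set w := F n z with hwdef
    have hstep : etaTilde F m (k + 1 + 1) n z - etaTilde F m (k + 1) n z
        = (etaTilde F m (k + 1) (n + 1) w - etaTilde F m k (n + 1) w) / m n := by
      rw [hrec (k + 1) n z, hrec k n z, div_sub_div_same]
    rw [hstep, norm_div]
    have hIH := IH (n + 1) w hw
    have hL2 : ‖w‖ ≤ Real.exp (lam + 2 * ε) * ‖z‖ := L2 n z hz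
    have hQle : Q (n + 1) ≤ Real.exp ε * Q n := by
      rw [hQ (n + 1), hQ n]
      have h1 : Real.exp (-ε) * q n ≤ q (n + 1) := (hqtemp n).1
      have h2 : 0 < Real.exp (-ε) * q n := by have := hq0 n; positivity
      calc 2 * Real.exp (-lam + 2 * ε) / q (n + 1)
          ≤ 2 * Real.exp (-lam + 2 * ε) / (Real.exp (-ε) * q n) :=
            div_le_div_of_nonneg_left (by positivity) h2 h1
        _ = Real.exp ε * (2 * Real.exp (-lam + 2 * ε) / q n) := by
            have h3 : q n ≠ 0 := (hq0 n).ne'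
            rw [Real.exp_neg]
            field_simp
    have hQ1pos : 0 ≤ Q (n + 1) := by rw [hQ (n + 1)]; have := hq0 (n + 1); positivity
    have hQpos : 0 ≤ Q n := by rw [hQ n]; have := hq0 n; positivity
    calc ‖etaTilde F m (k + 1) (n + 1) w - etaTilde F m k (n + 1) w‖
          / ‖m n‖
        ≤ (Real.exp ((k : ℝ) * (lam + 6 * ε)) * ‖w‖ ^ 2 * Q (n + 1))
          / Real.exp (lam - ε) :=
          div_le_div₀ (mul_nonneg (mul_nonneg (Real.exp_pos _).le (by positivity)) hQ1pos)
            hIH (Real.exp_pos _) (hmlow n)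
      _ ≤ (Real.exp ((k : ℝ) * (lam + 6 * ε)) * (Real.exp (lam + 2 * ε) * ‖z‖) ^ 2
          * (Real.exp ε * Q n)) / Real.exp (lam - ε) := by
          gcongr
      _ = Real.exp ((k : ℝ) * (lam + 6 * ε)) * Real.exp (lam + 2 * ε) ^ 2 * Real.exp ε
            / Real.exp (lam - ε) * ‖z‖ ^ 2 * Q n := by ring
      _ = Real.exp (((k + 1 : ℕ) : ℝ) * (lam + 6 * ε)) * ‖z‖ ^ 2 * Q n := by
          have e2 : Real.exp ((k : ℝ) * (lam + 6 * ε)) * Real.exp (lam + 2 * ε) ^ 2 * Real.exp ε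
              / Real.exp (lam - ε) = Real.exp (((k + 1 : ℕ) : ℝ) * (lam + 6 * ε)) := by
            rw [pow_two, ← Real.exp_add, ← Real.exp_add, ← Real.exp_add, ← Real.exp_sub]
            congr 1
            push_cast
            ring
          rw [e2]
end

section
/- Let λ < 0 and ε > 0 with λ + 6ε < 0 and e^{λ}·(e^ε − 1) ≤ 1, and set s := Σ_{m≥0} e^{m(λ+6ε)}. Let (q_n)_{n≥0} be positive reals with e^{−ε}·q_n ≤ q_{n+1} ≤ e^{ε}·q_n, and for each n let F_n : D(q_n) → D(q_{n+1}) be holomorphic with F_n(0) = 0 and m_n := F_n'(0) satisfying e^{λ−ε} ≤ |m_n| ≤ e^{λ+ε}. Set q'_n := (e^{λ}(e^ε − 1)/2)·q_n and Q_n := 2·e^{−λ+2ε}/q_n, and define η̃_{m,n} on D(q'_n) by η̃_{0,n}(z) := z and η̃_{m,n}(z) := (F_{n+m−1} ∘ ⋯ ∘ F_n)(z)/(m_n·⋯·m_{n+m−1}). Then for each n the sequence (η̃_{m,n})_{m≥0} converges, uniformly on compact subsets of D(q'_n), to a holomorphic function η̃_n : D(q'_n) → ℂ satisfying η̃_n(0)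 = 0, η̃_n'(0) = 1, |η̃_n(z) − z| ≤ s·Q_n·|z|² for all z ∈ D(q'_n), and η̃_{n+1}(F_n(z)) = m_n·η̃_n(z) for all z ∈ D(q'_n). -/
open Metric Set Filter

lemma compChain_succ (F : ℕ → ℂ → ℂ) (k n : ℕ) (z : ℂ) :
    compChain F (k + 1) n z = compChain F k (n + 1) (F n z) := rfl

lemma compChain_succ' (F : ℕ → ℂ → ℂ) (k n : ℕ) (z : ℂ) :
    compChain F (k + 1) n z = F (n + k) (compChain F k n z) := by
  induction k generalizing n z with
  | zero => simp [compChain]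
  | succ k ih =>
      rw [compChain_succ, ih, compChain_succ]
      congr 1
      omega

lemma compChain_map_zero (F : ℕ → ℂ → ℂ) (hF0 : ∀ n, F n 0 = 0) (k n : ℕ) :
    compChain F k n 0 = 0 := by
  induction k generalizing n with
  | zero => rfl
  | succ k ih => rw [compChain_succ, hF0]; exact ih (n + 1)

lemma etaTilde_telescope (F : ℕ → ℂ → ℂ) (m : ℕ → ℂ) (K n : ℕ) (z : ℂ) :
    etaTilde F m K n z
      = z + ∑ k ∈ Finset.range K, (etaTilde F m (k + 1) n z - etaTilde F m k n z) := by
  induction K with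
  | zero => simp [etaTilde, compChain]
  | succ K ih => rw [Finset.sum_range_succ, ← add_assoc, ← ih]; ring

lemma tuo_add_id {f : ℕ → ℂ → ℂ} {g : ℂ → ℂ} {s : Set ℂ}
    (h : TendstoUniformlyOn f g Filter.atTop s) :
    TendstoUniformlyOn (fun N x => x + f N x) (fun x => x + g x) Filter.atTop s := by
  rw [Metric.tendstoUniformlyOn_iff] at h ⊢
  simpa [dist_add_left] using h


/-- **Existence of the straightening maps.** The renormalized compositions
`η̃_{k,n}` converge, uniformly on compact subsets of `D(q'_n)`, to holomorphic
maps `η̃_n` tangent to the identity at `0`, close to the identity, and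
conjugating the dynamics of the `F_n` to the linear maps `z ↦ m_n · z`. -/
theorem etaTilde_convergence
    (lam ε : ℝ) (hlam : lam < 0) (hε : 0 < ε) (h6 : lam + 6 * ε < 0)
    (hcond : Real.exp lam * (Real.exp ε - 1) ≤ 1)
    (s : ℝ) (hs : s = ∑' m : ℕ, Real.exp ((m : ℝ) * (lam + 6 * ε)))
    (q : ℕ → ℝ) (hq0 : ∀ n, 0 < q n)
    (hqtemp : ∀ n, Real.exp (-ε) * q n ≤ q (n + 1) ∧ q (n + 1) ≤ Real.exp ε * q n)
    (F : ℕ → ℂ → ℂ)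
    (hFhol : ∀ n, DifferentiableOn ℂ (F n) (Metric.ball 0 (q n)))
    (hFmaps : ∀ n, Set.MapsTo (F n) (Metric.ball 0 (q n)) (Metric.ball 0 (q (n + 1))))
    (hF0 : ∀ n, F n 0 = 0)
    (m : ℕ → ℂ) (hm : ∀ n, m n = deriv (F n) 0)
    (hmlow : ∀ n, Real.exp (lam - ε) ≤ ‖m n‖)
    (hmup : ∀ n, ‖m n‖ ≤ Real.exp (lam + ε))
    (q' : ℕ → ℝ) (hq' : ∀ n, q' n = Real.exp lam * (Real.exp ε - 1) / 2 * q n)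
    (Q : ℕ → ℝ) (hQ : ∀ n, Q n = 2 * Real.exp (-lam + 2 * ε) / q n) :
    ∃ η : ℕ → ℂ → ℂ,
      (∀ n, TendstoLocallyUniformlyOn (fun k => etaTilde F m k n) (η n)
          Filter.atTop (Metric.ball 0 (q' n))) ∧
      (∀ n, DifferentiableOn ℂ (η n) (Metric.ball 0 (q' n))) ∧
      (∀ n, η n 0 = 0) ∧
      (∀ n, deriv (η n) 0 = 1) ∧
      (∀ n, ∀ z ∈ Metric.ball (0 : ℂ) (q' n),
        ‖η n z - z‖ ≤ s * Q n * ‖z‖ ^ 2) ∧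
      (∀ n, ∀ z ∈ Metric.ball (0 : ℂ) (q' n),
        η (n + 1) (F n z) = m n * η n z) := by
  have expe : ∀ x y : ℝ, Real.exp x * Real.exp y = Real.exp (x + y) :=
    fun x y => (Real.exp_add x y).symm
  have hone_lt : (1 : ℝ) < Real.exp ε := Real.one_lt_exp_iff.mpr hε
  have hcpos : 0 < Real.exp lam * (Real.exp ε - 1) / 2 := by
    have := Real.exp_pos lam; nlinarith
  have hq'pos : ∀ n, 0 < q' n := by
    intro n; rw [hq']; exact mul_pos hcpos (hq0 n)
  have hcle : Real.exp lam * (Real.exp ε - 1) / 2 ≤ 1 / 2 := by nlinarith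
  have hq'le : ∀ n, q' n ≤ q n := by
    intro n; rw [hq']
    nlinarith [hq0 n, hcpos]
  have hmne : ∀ n, m n ≠ 0 := by
    intro n h
    have := hmlow n
    rw [h] at this
    simp at this
    nlinarith [Real.exp_pos (lam - ε)]
  -- the quadratic estimate for each F n
  have hstep : ∀ n, ∀ z ∈ Metric.ball (0 : ℂ) (q n),
      ‖F n z - m n * z‖ ≤ 2 * Real.exp ε / q n * ‖z‖ ^ 2 := by
    intro n z hz
    set h : ℂ → ℂ := dslope (F n) 0 with hh
    have hmapF : Set.MapsTo (F n) (Metric.ball 0 (q n))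
        (Metric.ball (F n 0) (Real.exp ε * q n)) := by
      rw [hF0 n]
      exact (hFmaps n).mono_right (Metric.ball_subset_ball (hqtemp n).2)
    have h1 : ∀ w ∈ Metric.ball (0 : ℂ) (q n), ‖h w‖ ≤ Real.exp ε := by
      intro w hw
      have := Complex.norm_dslope_le_div_of_mapsTo_ball (hFhol n) (hmapF.mono_right Metric.ball_subset_closedBall) hw
      rwa [mul_div_assoc, div_self (hq0 n).ne', mul_one] at this
    have h0 : h 0 = m n := by rw [hh, dslope_same, hm n]
    have hhd : DifferentiableOn ℂ h (Metric.ball 0 (q n)) :=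
      (Complex.differentiableOn_dslope (isOpen_ball.mem_nhds (mem_ball_self (hq0 n)))).mpr (hFhol n)
    have hmaps2 : Set.MapsTo h (Metric.ball 0 (q n)) (Metric.ball (h 0) (2 * Real.exp ε)) := by
      intro w hw
      rw [Metric.mem_ball, dist_eq_norm]
      have e1 : ‖h w‖ ≤ Real.exp ε := h1 w hw
      have e2 : ‖h 0‖ ≤ Real.exp (lam + ε) := by
        rw [h0]; exact hmup n
      have e3 : Real.exp (lam + ε) < Real.exp ε := Real.exp_lt_exp.mpr (by linarith)
      calc ‖h w - h 0‖ ≤ ‖h w‖ + ‖h 0‖ := norm_sub_le _ _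
        _ < 2 * Real.exp ε := by linarith
    have h2 : ‖dslope h 0 z‖ ≤ 2 * Real.exp ε / q n :=
      Complex.norm_dslope_le_div_of_mapsTo_ball hhd (hmaps2.mono_right Metric.ball_subset_closedBall) hz
    have e1 : (z - 0) • dslope h 0 z = h z - h 0 := sub_smul_dslope h 0 z
    have e2 : (z - 0) • h z = F n z - F n 0 := sub_smul_dslope (F n) 0 z
    rw [sub_zero, smul_eq_mul] at e1 e2
    rw [hF0 n, sub_zero] at e2
    have e3 : F n z - m n * z = z * z * dslope h 0 z := by
      rw [← e2, mul_assoc, e1, h0]; ring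
    rw [e3]
    calc ‖z * z * dslope h 0 z‖ = ‖z‖ ^ 2 * ‖dslope h 0 z‖ := by
          rw [norm_mul, norm_mul]; ring
      _ ≤ ‖z‖ ^ 2 * (2 * Real.exp ε / q n) := by
          gcongr
      _ = 2 * Real.exp ε / q n * ‖z‖ ^ 2 := by ring

  -- lower bound on q along the orbit
  have qlow : ∀ (n k : ℕ), Real.exp (-((k : ℝ) * ε)) * q n ≤ q (n + k) := by
    intro n k
    induction k with
    | zero => simp
    | succ k ih =>
        have h1 := (hqtemp (n + k)).1
        calc Real.exp (-(((((k : ℕ) + 1 : ℕ)) : ℝ) * ε)) * q n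
            = Real.exp (-ε) * (Real.exp (-((k : ℝ) * ε)) * q n) := by
              rw [← mul_assoc, expe]; push_cast; ring_nf
          _ ≤ Real.exp (-ε) * q (n + k) := by
              exact mul_le_mul_of_nonneg_left ih (Real.exp_pos _).le
          _ ≤ q (n + (k + 1)) := h1
  have hq_up : ∀ (n k : ℕ), q n ≤ Real.exp ((k : ℝ) * ε) * q (n + k) := by
    intro n k
    have h := qlow n k
    calc q n = Real.exp ((k : ℝ) * ε) * (Real.exp (-((k : ℝ) * ε)) * q n) := by
          rw [← mul_assoc, expe]; simp
      _ ≤ Real.exp ((k : ℝ) * ε) * q (n + k) :=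
          mul_le_mul_of_nonneg_left h (Real.exp_pos _).le
  have h3ε : lam + 3 * ε < 0 := by linarith
  have hk3 : ∀ k : ℕ, (k : ℝ) * (lam + 2 * ε) ≤ -((k : ℝ) * ε) := by
    intro k
    have hk : (0 : ℝ) ≤ (k : ℝ) := Nat.cast_nonneg k
    nlinarith
  have hshrink : ∀ (k : ℕ) n, Real.exp ((k : ℝ) * (lam + 2 * ε)) * q' n
      ≤ Real.exp (-((k : ℝ) * ε)) * q n := by
    intro k n
    rw [hq']
    have e1 : Real.exp ((k : ℝ) * (lam + 2 * ε)) ≤ Real.exp (-((k : ℝ) * ε)) :=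
      Real.exp_le_exp.mpr (hk3 k)
    calc Real.exp ((k : ℝ) * (lam + 2 * ε)) * (Real.exp lam * (Real.exp ε - 1) / 2 * q n)
        ≤ Real.exp ((k : ℝ) * (lam + 2 * ε)) * q n := by
          apply mul_le_mul_of_nonneg_left _ (Real.exp_pos _).le
          nlinarith [hq0 n]
      _ ≤ Real.exp (-((k : ℝ) * ε)) * q n := mul_le_mul_of_nonneg_right e1 (hq0 n).le
  -- the orbit bound
  have orbit : ∀ n (z : ℂ), ‖z‖ < q' n → ∀ k,
      ‖compChain F k n z‖ ≤ Real.exp ((k : ℝ) * (lam + 2 * ε)) * ‖z‖ := by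
    intro n z hz k
    induction k with
    | zero => simp [compChain]
    | succ k ih =>
        have hEk : (0:ℝ) < Real.exp ((k : ℝ) * (lam + 2 * ε)) := Real.exp_pos _
        have hmem : compChain F k n z ∈ Metric.ball (0 : ℂ) (q (n + k)) := by
          rw [Metric.mem_ball, dist_zero_right]
          calc ‖compChain F k n z‖ ≤ Real.exp ((k : ℝ) * (lam + 2 * ε)) * ‖z‖ := ih
            _ < Real.exp ((k : ℝ) * (lam + 2 * ε)) * q' n := by
                exact mul_lt_mul_of_pos_left hz hEk
            _ ≤ Real.exp (-((k : ℝ) * ε)) * q n := hshrink k n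
            _ ≤ q (n + k) := qlow n k
        have hFz := hstep (n + k) _ hmem
        set Zk := ‖compChain F k n z‖ with hZk
        have hZk0 : 0 ≤ Zk := norm_nonneg _
        have hTA : 2 * Real.exp ε / q (n + k) * Zk
            ≤ Real.exp (lam + ε) * (Real.exp ε - 1) := by
          rw [div_mul_eq_mul_div, div_le_iff₀ (hq0 (n + k))]
          have l1 : Zk ≤ Real.exp ((k : ℝ) * (lam + 2 * ε))
              * (Real.exp lam * (Real.exp ε - 1) / 2 * q n) := by
            calc Zk ≤ Real.exp ((k : ℝ) * (lam + 2 * ε)) * ‖z‖ := ih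
              _ ≤ _ := by
                  apply mul_le_mul_of_nonneg_left _ hEk.le
                  rw [← hq' n]; exact hz.le
          have l2 : q n ≤ Real.exp ((k : ℝ) * ε) * q (n + k) := hq_up n k
          have hek35 : Real.exp ((k : ℝ) * (lam + 2 * ε)) * Real.exp ((k : ℝ) * ε)
              ≤ 1 := by
            rw [expe, Real.exp_le_one_iff]
            have hk : (0 : ℝ) ≤ (k : ℝ) := Nat.cast_nonneg k
            nlinarith
          calc 2 * Real.exp ε * Zk
              ≤ 2 * Real.exp ε * (Real.exp ((k : ℝ) * (lam + 2 * ε))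
                * (Real.exp lam * (Real.exp ε - 1) / 2 * q n)) := by
                apply mul_le_mul_of_nonneg_left l1
                positivity
            _ ≤ 2 * Real.exp ε * (Real.exp ((k : ℝ) * (lam + 2 * ε))
                * (Real.exp lam * (Real.exp ε - 1) / 2
                  * (Real.exp ((k : ℝ) * ε) * q (n + k)))) := by
                have h2 : 0 ≤ Real.exp lam * (Real.exp ε - 1) / 2 := hcpos.le
                gcongr
            _ = (Real.exp ((k : ℝ) * (lam + 2 * ε)) * Real.exp ((k : ℝ) * ε))
                * ((Real.exp ε * Real.exp lam) * (Real.exp ε - 1)) * q (n + k) := by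
                ring
            _ ≤ 1 * ((Real.exp ε * Real.exp lam) * (Real.exp ε - 1)) * q (n + k) := by
                have : 0 ≤ (Real.exp ε * Real.exp lam) * (Real.exp ε - 1) := by
                  nlinarith [mul_pos (Real.exp_pos ε) (Real.exp_pos lam)]
                apply mul_le_mul_of_nonneg_right _ (hq0 (n + k)).le
                exact mul_le_mul_of_nonneg_right hek35 this
            _ = Real.exp (lam + ε) * (Real.exp ε - 1) * q (n + k) := by
                rw [one_mul, mul_comm (Real.exp ε) (Real.exp lam), expe]
        rw [compChain_succ']
        have hnorm_m : ‖m (n + k) * compChain F k n z‖ ≤ Real.exp (lam + ε) * Zk := by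
          rw [norm_mul, ← hZk]
          exact mul_le_mul_of_nonneg_right
            (by exact hmup (n + k)) hZk0
        calc ‖F (n + k) (compChain F k n z)‖
            = ‖(F (n + k) (compChain F k n z) - m (n + k) * compChain F k n z)
                + m (n + k) * compChain F k n z‖ := by ring_nf
          _ ≤ ‖F (n + k) (compChain F k n z) - m (n + k) * compChain F k n z‖
              + ‖m (n + k) * compChain F k n z‖ := norm_add_le _ _
          _ ≤ 2 * Real.exp ε / q (n + k) * Zk ^ 2 + Real.exp (lam + ε) * Zk := by
              exact add_le_add hFz hnorm_m
          _ = (2 * Real.exp ε / q (n + k) * Zk) * Zk + Real.exp (lam + ε) * Zk := by ring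
          _ ≤ (Real.exp (lam + ε) * (Real.exp ε - 1)) * Zk + Real.exp (lam + ε) * Zk := by
              exact add_le_add_left (mul_le_mul_of_nonneg_right hTA hZk0) _
          _ = (Real.exp (lam + ε) * Real.exp ε) * Zk := by ring
          _ = Real.exp (lam + 2 * ε) * Zk := by rw [expe]; ring_nf
          _ ≤ Real.exp (lam + 2 * ε) * (Real.exp ((k : ℝ) * (lam + 2 * ε)) * ‖z‖) :=
              mul_le_mul_of_nonneg_left ih (Real.exp_pos _).le
          _ = Real.exp ((((k : ℕ) + 1 : ℕ) : ℝ) * (lam + 2 * ε)) * ‖z‖ := by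
              rw [← mul_assoc, expe]; push_cast; ring_nf
  have memball : ∀ n k (z : ℂ), ‖z‖ < q' n →
      compChain F k n z ∈ Metric.ball (0 : ℂ) (q (n + k)) := by
    intro n k z hz
    rw [Metric.mem_ball, dist_zero_right]
    calc ‖compChain F k n z‖ ≤ Real.exp ((k : ℝ) * (lam + 2 * ε)) * ‖z‖ := orbit n z hz k
      _ < Real.exp ((k : ℝ) * (lam + 2 * ε)) * q' n :=
          mul_lt_mul_of_pos_left hz (Real.exp_pos _)
      _ ≤ Real.exp (-((k : ℝ) * ε)) * q n := hshrink k n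
      _ ≤ q (n + k) := qlow n k

  -- the key bound on consecutive differences
  have keybound : ∀ n (z : ℂ), ‖z‖ < q' n → ∀ k,
      ‖etaTilde F m (k + 1) n z - etaTilde F m k n z‖
        ≤ Q n * Real.exp ((k : ℝ) * (lam + 6 * ε)) * ‖z‖ ^ 2 := by
    intro n z hz k
    have hPnorm : ∀ j : ℕ, Real.exp ((j : ℝ) * (lam - ε))
        ≤ ‖∏ i ∈ Finset.range j, m (n + i)‖ := by
      intro j
      rw [norm_prod]
      calc Real.exp ((j : ℝ) * (lam - ε)) = ∏ _i ∈ Finset.range j, Real.exp (lam - ε) := by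
            rw [Finset.prod_const, Finset.card_range, ← Real.exp_nat_mul]
        _ ≤ ∏ i ∈ Finset.range j, ‖m (n + i)‖ :=
            Finset.prod_le_prod (fun i _ => (Real.exp_pos _).le)
              (fun i _ => by exact hmlow (n + i))
    have hPpos : ∀ j : ℕ, (0 : ℝ) < ‖∏ i ∈ Finset.range j, m (n + i)‖ :=
      fun j => lt_of_lt_of_le (Real.exp_pos _) (hPnorm j)
    have hPne : ∀ j : ℕ, (∏ i ∈ Finset.range j, m (n + i)) ≠ 0 :=
      fun j => norm_pos_iff.mp (hPpos j)
    have hdiff_eq : etaTilde F m (k + 1) n z - etaTilde F m k n z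
        = (compChain F (k + 1) n z - m (n + k) * compChain F k n z)
          / ∏ i ∈ Finset.range (k + 1), m (n + i) := by
      rw [etaTilde, etaTilde, Finset.prod_range_succ]
      rw [div_sub_div _ _ (mul_ne_zero (hPne k) (hmne (n + k))) (hPne k)]
      rw [div_eq_div_iff (mul_ne_zero (mul_ne_zero (hPne k) (hmne (n + k))) (hPne k))
        (mul_ne_zero (hPne k) (hmne (n + k)))]
      ring
    have hmem := memball n k z hz
    have hnum : ‖compChain F (k + 1) n z - m (n + k) * compChain F k n z‖
        ≤ 2 * Real.exp ε / q (n + k) * ‖compChain F k n z‖ ^ 2 := by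
      rw [compChain_succ']
      exact hstep (n + k) _ hmem
    have hZk : ‖compChain F k n z‖ ≤ Real.exp ((k : ℝ) * (lam + 2 * ε)) * ‖z‖ :=
      orbit n z hz k
    have hq_inv : 2 * Real.exp ε / q (n + k)
        ≤ 2 * Real.exp (((k : ℝ) + 1) * ε) / q n := by
      rw [div_le_div_iff₀ (hq0 (n + k)) (hq0 n)]
      calc 2 * Real.exp ε * q n
          ≤ 2 * Real.exp ε * (Real.exp ((k : ℝ) * ε) * q (n + k)) := by
            apply mul_le_mul_of_nonneg_left (hq_up n k); positivity
        _ = 2 * Real.exp (((k : ℝ) + 1) * ε) * q (n + k) := by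
            rw [show 2 * Real.exp ε * (Real.exp ((k : ℝ) * ε) * q (n + k))
              = 2 * (Real.exp ε * Real.exp ((k : ℝ) * ε)) * q (n + k) by ring, expe]
            ring_nf
    have hexp : Real.exp (((k : ℝ) + 1) * ε) * Real.exp ((k : ℝ) * (lam + 2 * ε)) ^ 2
        = Real.exp (-lam + 2 * ε)
          * (Real.exp ((k : ℝ) * (lam + 6 * ε)) * Real.exp (((k : ℝ) + 1) * (lam - ε))) := by
      rw [pow_two]
      simp only [expe]
      exact congrArg Real.exp (by ring)
    rw [hdiff_eq, norm_div]
    have hden : Real.exp ((((k : ℕ) + 1 : ℕ) : ℝ) * (lam - ε))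
        ≤ ‖∏ i ∈ Finset.range (k + 1), m (n + i)‖ := hPnorm (k + 1)
    calc ‖compChain F (k + 1) n z - m (n + k) * compChain F k n z‖
          / ‖∏ i ∈ Finset.range (k + 1), m (n + i)‖
        ≤ (2 * Real.exp ε / q (n + k) * ‖compChain F k n z‖ ^ 2)
          / Real.exp (((k : ℝ) + 1) * (lam - ε)) := by
          have hqnk := hq0 (n + k)
          apply div_le_div₀ (by positivity) hnum (Real.exp_pos _)
          calc Real.exp (((k : ℝ) + 1) * (lam - ε))
              = Real.exp ((((k : ℕ) + 1 : ℕ) : ℝ) * (lam - ε)) := by push_cast; ring_nf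
            _ ≤ _ := hden
      _ ≤ (2 * Real.exp (((k : ℝ) + 1) * ε) / q n
            * (Real.exp ((k : ℝ) * (lam + 2 * ε)) * ‖z‖) ^ 2)
          / Real.exp (((k : ℝ) + 1) * (lam - ε)) := by
          have hqn := hq0 n
          have hqnk := hq0 (n + k)
          apply div_le_div₀ _ _ (Real.exp_pos _) le_rfl
          · positivity
          · apply mul_le_mul hq_inv
            · exact pow_le_pow_left₀ (norm_nonneg _) hZk 2
            · positivity
            · positivity
      _ = Q n * Real.exp ((k : ℝ) * (lam + 6 * ε)) * ‖z‖ ^ 2 := by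
          rw [hQ n, mul_pow]
          have h5 : Real.exp (((k : ℝ) + 1) * ε) * Real.exp ((k : ℝ) * (lam + 2 * ε)) ^ 2
              / Real.exp (((k : ℝ) + 1) * (lam - ε))
              = Real.exp (-lam + 2 * ε) * Real.exp ((k : ℝ) * (lam + 6 * ε)) := by
            rw [div_eq_iff (Real.exp_ne_zero _), hexp]; ring
          calc 2 * Real.exp (((k : ℝ) + 1) * ε) / q n
                * (Real.exp ((k : ℝ) * (lam + 2 * ε)) ^ 2 * ‖z‖ ^ 2)
                / Real.exp (((k : ℝ) + 1) * (lam - ε))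
              = (2 / q n * ‖z‖ ^ 2) * (Real.exp (((k : ℝ) + 1) * ε)
                * Real.exp ((k : ℝ) * (lam + 2 * ε)) ^ 2
                / Real.exp (((k : ℝ) + 1) * (lam - ε))) := by ring
            _ = (2 / q n * ‖z‖ ^ 2)
                * (Real.exp (-lam + 2 * ε) * Real.exp ((k : ℝ) * (lam + 6 * ε))) := by
                rw [h5]
            _ = 2 * Real.exp (-lam + 2 * ε) / q n * Real.exp ((k : ℝ) * (lam + 6 * ε))
                * ‖z‖ ^ 2 := by ring

  -- summability of the geometric majorant
  have hsum_exp : Summable (fun k : ℕ => Real.exp ((k : ℝ) * (lam + 6 * ε))) := by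
    have h1 : (fun k : ℕ => Real.exp ((k : ℝ) * (lam + 6 * ε)))
        = fun k : ℕ => (Real.exp (lam + 6 * ε)) ^ k := by
      funext k; exact Real.exp_nat_mul _ k
    rw [h1]
    exact summable_geometric_of_lt_one (Real.exp_pos _).le (Real.exp_lt_one_iff.mpr h6)
  have hs_one : (1 : ℝ) ≤ s := by
    rw [hs]
    have h0 := Summable.le_tsum hsum_exp 0 (fun j _ => (Real.exp_pos _).le)
    simpa using h0
  have hQpos : ∀ n, 0 < Q n := by
    intro n; rw [hQ]
    have := hq0 n
    positivity
  -- definition of η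
  set η : ℕ → ℂ → ℂ := fun n z =>
    z + ∑' k : ℕ, (etaTilde F m (k + 1) n z - etaTilde F m k n z) with hη
  -- uniform convergence
  have key : ∀ n, TendstoUniformlyOn (fun K => etaTilde F m K n) (η n)
      Filter.atTop (Metric.ball 0 (q' n)) := by
    intro n
    have hu : Summable (fun k : ℕ =>
        Q n * Real.exp ((k : ℝ) * (lam + 6 * ε)) * (q' n) ^ 2) :=
      (hsum_exp.mul_left (Q n)).mul_right _
    have hb : ∀ (k : ℕ) (z : ℂ), z ∈ Metric.ball (0 : ℂ) (q' n) →
        ‖etaTilde F m (k + 1) n z - etaTilde F m k n z‖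
          ≤ Q n * Real.exp ((k : ℝ) * (lam + 6 * ε)) * (q' n) ^ 2 := by
      intro k z hzb
      have hzn : ‖z‖ < q' n := by rwa [Metric.mem_ball, dist_zero_right] at hzb
      calc ‖etaTilde F m (k + 1) n z - etaTilde F m k n z‖
          ≤ Q n * Real.exp ((k : ℝ) * (lam + 6 * ε)) * ‖z‖ ^ 2 := keybound n z hzn k
        _ ≤ Q n * Real.exp ((k : ℝ) * (lam + 6 * ε)) * (q' n) ^ 2 := by
            apply mul_le_mul_of_nonneg_left _ (mul_pos (hQpos n) (Real.exp_pos _)).le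
            exact pow_le_pow_left₀ (norm_nonneg _) hzn.le 2
    have T0 := tendstoUniformlyOn_tsum_nat hu hb
    have Tadd := tuo_add_id T0
    apply Tadd.congr
    filter_upwards with K
    intro z _
    exact (etaTilde_telescope F m K n z).symm
  -- differentiability of the approximants
  have hchain_diff : ∀ (k n : ℕ),
      DifferentiableOn ℂ (fun z => compChain F k n z) (Metric.ball 0 (q n)) := by
    intro k
    induction k with
    | zero => intro n; exact differentiableOn_id
    | succ k ih =>
        intro n
        have : (fun z => compChain F (k + 1) n z)
            = (fun w => compChain F k (n + 1) w) ∘ (F n) := rfl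
        rw [this]
        exact DifferentiableOn.comp (ih (n + 1)) (hFhol n) (hFmaps n)
  have hdiff_eta : ∀ (k n : ℕ),
      DifferentiableOn ℂ (etaTilde F m k n) (Metric.ball 0 (q' n)) := by
    intro k n
    have h1 : DifferentiableOn ℂ (fun z => compChain F k n z) (Metric.ball 0 (q' n)) :=
      (hchain_diff k n).mono (Metric.ball_subset_ball (hq'le n))
    exact h1.div_const _
  have hηdiff : ∀ n, DifferentiableOn ℂ (η n) (Metric.ball 0 (q' n)) := by
    intro n
    exact (key n).tendstoLocallyUniformlyOn.differentiableOn
      (Filter.Eventually.of_forall (fun k => hdiff_eta k n)) isOpen_ball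
  -- η n 0 = 0
  have hη0 : ∀ n, η n 0 = 0 := by
    intro n
    have h1 : ∀ k : ℕ, etaTilde F m k n 0 = 0 := by
      intro k; rw [etaTilde, compChain_map_zero F hF0, zero_div]
    simp [hη, h1]
  -- the distortion bound
  have hbound : ∀ n (z : ℂ), ‖z‖ < q' n → ‖η n z - z‖ ≤ s * Q n * ‖z‖ ^ 2 := by
    intro n z hz
    have hdz : η n z - z = ∑' k : ℕ, (etaTilde F m (k + 1) n z - etaTilde F m k n z) := by
      rw [hη]; ring
    have hsum' : Summable (fun k : ℕ =>
        Q n * Real.exp ((k : ℝ) * (lam + 6 * ε)) * ‖z‖ ^ 2) :=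
      (hsum_exp.mul_left (Q n)).mul_right _
    have hsumn : Summable (fun k : ℕ =>
        ‖etaTilde F m (k + 1) n z - etaTilde F m k n z‖) :=
      Summable.of_nonneg_of_le (fun k => norm_nonneg _) (fun k => keybound n z hz k) hsum'
    rw [hdz]
    calc ‖∑' k : ℕ, (etaTilde F m (k + 1) n z - etaTilde F m k n z)‖
        ≤ ∑' k : ℕ, ‖etaTilde F m (k + 1) n z - etaTilde F m k n z‖ :=
          norm_tsum_le_tsum_norm hsumn
      _ ≤ ∑' k : ℕ, Q n * Real.exp ((k : ℝ) * (lam + 6 * ε)) * ‖z‖ ^ 2 :=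
          Summable.tsum_le_tsum (fun k => keybound n z hz k) hsumn hsum'
      _ = (Q n * ‖z‖ ^ 2) * ∑' k : ℕ, Real.exp ((k : ℝ) * (lam + 6 * ε)) := by
          rw [← tsum_mul_left]
          exact tsum_congr (fun k => by ring)
      _ = s * Q n * ‖z‖ ^ 2 := by rw [← hs]; ring
  -- the derivative at 0
  have hηderiv : ∀ n, deriv (η n) 0 = 1 := by
    intro n
    have hsQ : 0 < s * Q n := mul_pos (by linarith) (hQpos n)
    have hD : HasDerivAt (η n) 1 0 := by
      rw [hasDerivAt_iff_isLittleO]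
      simp only [hη0 n, sub_zero, smul_eq_mul, mul_one]
      rw [Asymptotics.isLittleO_iff]
      intro c hc
      have hδ : 0 < min (q' n) (c / (s * Q n)) := lt_min (hq'pos n) (by positivity)
      filter_upwards [Metric.ball_mem_nhds (0 : ℂ) hδ] with z hzb
      have hz1 : ‖z‖ < q' n :=
        lt_of_lt_of_le (by rwa [Metric.mem_ball, dist_zero_right] at hzb) (min_le_left _ _)
      have hz2 : ‖z‖ < c / (s * Q n) :=
        lt_of_lt_of_le (by rwa [Metric.mem_ball, dist_zero_right] at hzb) (min_le_right _ _)
      have h3 : s * Q n * ‖z‖ ≤ c := by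
        rw [lt_div_iff₀ hsQ] at hz2
        nlinarith
      calc ‖η n z - z‖ ≤ s * Q n * ‖z‖ ^ 2 := hbound n z hz1
        _ = (s * Q n * ‖z‖) * ‖z‖ := by ring
        _ ≤ c * ‖z‖ := mul_le_mul_of_nonneg_right h3 (norm_nonneg _)
    exact hD.deriv
  -- the conjugacy
  have hfun : ∀ n, ∀ z ∈ Metric.ball (0 : ℂ) (q' n), η (n + 1) (F n z) = m n * η n z := by
    intro n z hzb
    have hz : ‖z‖ < q' n := by rwa [Metric.mem_ball, dist_zero_right] at hzb
    have hFz : F n z ∈ Metric.ball (0 : ℂ) (q' (n + 1)) := by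
      have h1 : ‖F n z‖ ≤ Real.exp (((1 : ℕ) : ℝ) * (lam + 2 * ε)) * ‖z‖ := by
        have := orbit n z hz 1
        simpa [compChain] using this
      rw [Metric.mem_ball, dist_zero_right]
      have h2 : Real.exp (((1 : ℕ) : ℝ) * (lam + 2 * ε)) ≤ Real.exp (-ε) :=
        Real.exp_le_exp.mpr (by push_cast; nlinarith)
      have h3 : Real.exp (-ε) * q' n ≤ q' (n + 1) := by
        rw [hq' n, hq' (n + 1)]
        have := (hqtemp n).1
        calc Real.exp (-ε) * (Real.exp lam * (Real.exp ε - 1) / 2 * q n)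
            = Real.exp lam * (Real.exp ε - 1) / 2 * (Real.exp (-ε) * q n) := by ring
          _ ≤ Real.exp lam * (Real.exp ε - 1) / 2 * q (n + 1) :=
              mul_le_mul_of_nonneg_left this hcpos.le
      calc ‖F n z‖ ≤ Real.exp (((1 : ℕ) : ℝ) * (lam + 2 * ε)) * ‖z‖ := h1
        _ < Real.exp (((1 : ℕ) : ℝ) * (lam + 2 * ε)) * q' n :=
            mul_lt_mul_of_pos_left hz (Real.exp_pos _)
        _ ≤ Real.exp (-ε) * q' n := mul_le_mul_of_nonneg_right h2 (hq'pos n).le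
        _ ≤ q' (n + 1) := h3
    have t1 : Filter.Tendsto (fun K => etaTilde F m K (n + 1) (F n z)) Filter.atTop
        (nhds (η (n + 1) (F n z))) := (key (n + 1)).tendsto_at hFz
    have t2 : Filter.Tendsto (fun K => m n * etaTilde F m (K + 1) n z) Filter.atTop
        (nhds (m n * η n z)) := by
      have ta : Filter.Tendsto (fun K => etaTilde F m K n z) Filter.atTop
          (nhds (η n z)) := (key n).tendsto_at hzb
      have tb : Filter.Tendsto (fun K : ℕ => K + 1) Filter.atTop Filter.atTop :=
        Filter.tendsto_add_atTop_nat 1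
      exact (ta.comp tb).const_mul (m n)
    have heq : ∀ K, etaTilde F m K (n + 1) (F n z) = m n * etaTilde F m (K + 1) n z := by
      intro K
      have hPne : ∀ (j n' : ℕ), (∏ i ∈ Finset.range j, m (n' + i)) ≠ 0 := by
        intro j n'
        apply Finset.prod_ne_zero_iff.mpr
        intro i _
        exact hmne (n' + i)
      rw [etaTilde, etaTilde]
      have hps : ∏ i ∈ Finset.range (K + 1), m (n + i)
          = m n * ∏ i ∈ Finset.range K, m (n + 1 + i) := by
        rw [Finset.prod_range_succ']
        rw [add_zero, mul_comm]
        congr 1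
        exact Finset.prod_congr rfl (fun i _ => by congr 1; omega)
      rw [hps, compChain_succ]
      rw [mul_div_assoc']
      rw [eq_div_iff (mul_ne_zero (hmne n) (hPne K (n + 1)))]
      field_simp [hPne K (n + 1)]
    have t1' : Filter.Tendsto (fun K => m n * etaTilde F m (K + 1) n z) Filter.atTop
        (nhds (η (n + 1) (F n z))) := by
      have : (fun K => etaTilde F m K (n + 1) (F n z))
          = fun K => m n * etaTilde F m (K + 1) n z := funext heq
      rwa [this] at t1
    exact tendsto_nhds_unique t1' t2
  -- assemble
  refine ⟨η, fun n => (key n).tendstoLocallyUniformlyOn, hηdiff, hη0, hηderiv, ?_, hfun⟩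
  intro n z hzb
  have hz : ‖z‖ < q' n := by rwa [Metric.mem_ball, dist_zero_right] at hzb
  have := hbound n z hz
  exact this
end

section
/- Let r > 0 and let h : D(r) → ℂ be holomorphic with h(0) = 0 and |h(z₁) − h(z₂) − (z₁ − z₂)| ≤ (1/2)·|z₁ − z₂| for all z₁, z₂ ∈ D(r). Then: (i) (1/2)·|z₁ − z₂| ≤ |h(z₁) − h(z₂)| ≤ (3/2)·|z₁ − z₂| for all z₁, z₂ ∈ D(r), so in particular h is injective; (ii) every w ∈ D(r/4) equals h(z) for a unique z ∈ D(r/2); (iii) the resulting inverse map g : D(r/4) → D(r/2), characterized by h(g(w)) = w, is holomorphic and satisfies (2/3)·|w₁ − w₂| ≤ |g(w₁) − g(w₂)| ≤ 2·|w₁ − w₂| for all w₁, w₂ ∈ D(r/4). -/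
open Metric Filter Topology

/-- **Bi-Lipschitz inversion lemma.** If `h` is holomorphic on `D(r)`, fixes
`0`, and satisfies `|h z₁ - h z₂ - (z₁ - z₂)| ≤ (1/2)|z₁ - z₂|`, then `h` is
bi-Lipschitz (so injective), every point of `D(r/4)` has a unique preimage in
`D(r/2)`, and the resulting inverse `g : D(r/4) → D(r/2)` is holomorphic and
bi-Lipschitz. -/
theorem bilipschitz_inversion
    (r : ℝ) (hr : 0 < r)
    (h : ℂ → ℂ) (hhol : DifferentiableOn ℂ h (Metric.ball 0 r)) (h0 : h 0 = 0)
    (hLip : ∀ z₁ ∈ Metric.ball (0 : ℂ) r, ∀ z₂ ∈ Metric.ball (0 : ℂ) r,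
      ‖h z₁ - h z₂ - (z₁ - z₂)‖ ≤ 1 / 2 * ‖z₁ - z₂‖) :
    (∀ z₁ ∈ Metric.ball (0 : ℂ) r, ∀ z₂ ∈ Metric.ball (0 : ℂ) r,
      1 / 2 * ‖z₁ - z₂‖ ≤ ‖h z₁ - h z₂‖ ∧
      ‖h z₁ - h z₂‖ ≤ 3 / 2 * ‖z₁ - z₂‖) ∧
    Set.InjOn h (Metric.ball 0 r) ∧
    (∀ w ∈ Metric.ball (0 : ℂ) (r / 4),
      ∃! z, z ∈ Metric.ball (0 : ℂ) (r / 2) ∧ h z = w) ∧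
    ∃ g : ℂ → ℂ,
      Set.MapsTo g (Metric.ball 0 (r / 4)) (Metric.ball 0 (r / 2)) ∧
      (∀ w ∈ Metric.ball (0 : ℂ) (r / 4), h (g w) = w) ∧
      DifferentiableOn ℂ g (Metric.ball 0 (r / 4)) ∧
      (∀ w₁ ∈ Metric.ball (0 : ℂ) (r / 4), ∀ w₂ ∈ Metric.ball (0 : ℂ) (r / 4),
        2 / 3 * ‖w₁ - w₂‖ ≤ ‖g w₁ - g w₂‖ ∧
        ‖g w₁ - g w₂‖ ≤ 2 * ‖w₁ - w₂‖) := by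
  -- Part (i): bi-Lipschitz bounds for h
  have key1 : ∀ z₁ ∈ Metric.ball (0:ℂ) r, ∀ z₂ ∈ Metric.ball (0:ℂ) r,
      1 / 2 * ‖z₁ - z₂‖ ≤ ‖h z₁ - h z₂‖ ∧
      ‖h z₁ - h z₂‖ ≤ 3 / 2 * ‖z₁ - z₂‖ := by
    intro z₁ h₁ z₂ h₂
    have hl := hLip z₁ h₁ z₂ h₂
    set a := h z₁ - h z₂ with ha
    set b := z₁ - z₂ with hb
    have t1 : ‖a‖ ≤ ‖a - b‖ + ‖b‖ := by
      calc ‖a‖ = ‖(a - b) + b‖ := by ring_nf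
        _ ≤ ‖a - b‖ + ‖b‖ := norm_add_le _ _
    have t2 : ‖b‖ ≤ ‖a‖ + ‖a - b‖ := by
      calc ‖b‖ = ‖a - (a - b)‖ := by ring_nf
        _ = ‖a + -(a - b)‖ := by ring_nf
        _ ≤ ‖a‖ + ‖-(a - b)‖ := norm_add_le _ _
        _ = ‖a‖ + ‖a - b‖ := by rw [norm_neg]
    constructor <;> linarith
  -- injectivity
  have hinj : Set.InjOn h (Metric.ball 0 r) := by
    intro z₁ h₁ z₂ h₂ he
    have hk := (key1 z₁ h₁ z₂ h₂).1
    rw [he, sub_self, norm_zero] at hk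
    have h1 : ‖z₁ - z₂‖ ≤ 0 := by linarith
    have h2 : z₁ - z₂ = 0 :=
      norm_eq_zero.mp (le_antisymm h1 (norm_nonneg _))
    exact sub_eq_zero.mp h2
  have hball : Metric.ball (0:ℂ) (r/2) ⊆ Metric.ball (0:ℂ) r :=
    Metric.ball_subset_ball (by linarith)
  have hcball : Metric.closedBall (0:ℂ) (r/2) ⊆ Metric.ball (0:ℂ) r :=
    Metric.closedBall_subset_ball (by linarith)
  have hz_half : ∀ z ∈ Metric.ball (0:ℂ) r,
      ‖h z - z‖ ≤ 1/2 * ‖z‖ := by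
    intro z hz
    have := hLip z hz 0 (Metric.mem_ball_self hr)
    simpa [h0] using this
  -- existence via Banach fixed point
  have exist : ∀ w ∈ Metric.ball (0:ℂ) (r/4),
      ∃ z, ‖z‖ ≤ 2 * ‖w‖ ∧ h z = w := by
    intro w hw
    have hw4 : ‖w‖ < r/4 := by
      simpa [Complex.dist_eq] using hw
    haveI : CompleteSpace (Metric.closedBall (0:ℂ) (r/2)) :=
      Metric.isClosed_closedBall.completeSpace_coe
    haveI : Nonempty (Metric.closedBall (0:ℂ) (r/2)) :=
      ⟨⟨0, Metric.mem_closedBall_self (by positivity)⟩⟩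
    have hmem : ∀ z : ℂ, z ∈ Metric.closedBall (0:ℂ) (r/2) →
        w + z - h z ∈ Metric.closedBall (0:ℂ) (r/2) := by
      intro z hz
      have hzr : z ∈ Metric.ball (0:ℂ) r := hcball hz
      have hzb : ‖z‖ ≤ r/2 := by
        simpa [Complex.dist_eq] using hz
      have h1 := hz_half z hzr
      have h2 : ‖w + z - h z‖ ≤ ‖w‖ + ‖z - h z‖ := by
        calc ‖w + z - h z‖ = ‖w + (z - h z)‖ := by ring_nf
          _ ≤ ‖w‖ + ‖z - h z‖ := norm_add_le _ _
      have h3 : ‖z - h z‖ = ‖h z - z‖ := by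
        rw [← norm_neg]; ring_nf
      simp only [Metric.mem_closedBall, Complex.dist_eq, sub_zero]
      calc ‖w + z - h z‖ ≤ ‖w‖ + ‖h z - z‖ := by
            rw [← h3]; exact h2
        _ ≤ r/4 + 1/2 * (r/2) := by
            have := norm_nonneg z
            nlinarith
        _ = r/2 := by ring
    set T : Metric.closedBall (0:ℂ) (r/2) → Metric.closedBall (0:ℂ) (r/2) :=
      fun z => ⟨w + z.1 - h z.1, hmem z.1 z.2⟩ with hT
    have hcontr : ContractingWith (1/2 : NNReal) T := by
      constructor
      · rw [← NNReal.coe_lt_coe]; norm_num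
      · apply LipschitzWith.of_dist_le_mul
        intro z₁ z₂
        have e1 : dist (T z₁) (T z₂) =
            ‖(w + z₁.1 - h z₁.1) - (w + z₂.1 - h z₂.1)‖ := by
          simp only [hT, Subtype.dist_eq, Complex.dist_eq]
        have e2 : (w + z₁.1 - h z₁.1) - (w + z₂.1 - h z₂.1) =
            -(h z₁.1 - h z₂.1 - (z₁.1 - z₂.1)) := by ring
        have hl := hLip z₁.1 (hcball z₁.2) z₂.1 (hcball z₂.2)
        have e3 : dist z₁ z₂ = ‖z₁.1 - z₂.1‖ := by
          simp [Subtype.dist_eq, Complex.dist_eq]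
        rw [e1, e2, norm_neg, e3]
        calc ‖h z₁.1 - h z₂.1 - (z₁.1 - z₂.1)‖
            ≤ 1/2 * ‖z₁.1 - z₂.1‖ := hl
          _ = ((1/2 : NNReal) : ℝ) * ‖z₁.1 - z₂.1‖ := by norm_num
    set z₀ := ContractingWith.fixedPoint T hcontr with hz₀
    have hfix : T z₀ = z₀ := hcontr.fixedPoint_isFixedPt
    have hfix' : w + z₀.1 - h z₀.1 = z₀.1 := congrArg Subtype.val hfix
    have hhz₀ : h z₀.1 = w := by linear_combination -hfix'
    refine ⟨z₀.1, ?_, hhz₀⟩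
    have hzr : z₀.1 ∈ Metric.ball (0:ℂ) r := hcball z₀.2
    have h1 := hz_half z₀.1 hzr
    rw [hhz₀] at h1
    have h2 : ‖z₀.1‖ ≤ ‖w - z₀.1‖ + ‖w‖ := by
      calc ‖z₀.1‖ = ‖-(w - z₀.1) + w‖ := by ring_nf
        _ ≤ ‖-(w - z₀.1)‖ + ‖w‖ := norm_add_le _ _
        _ = ‖w - z₀.1‖ + ‖w‖ := by rw [norm_neg]
    linarith
  -- Part (ii): unique preimage
  have exu : ∀ w ∈ Metric.ball (0:ℂ) (r/4),
      ∃! z, z ∈ Metric.ball (0:ℂ) (r/2) ∧ h z = w := by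
    intro w hw
    obtain ⟨z, hz1, hz2⟩ := exist w hw
    have hw4 : ‖w‖ < r/4 := by simpa [Complex.dist_eq] using hw
    have hzball : z ∈ Metric.ball (0:ℂ) (r/2) := by
      simp only [Metric.mem_ball, Complex.dist_eq, sub_zero]
      linarith
    refine ⟨z, ⟨hzball, hz2⟩, ?_⟩
    rintro z' ⟨hz'1, hz'2⟩
    exact hinj (hball hz'1) (hball hzball) (by rw [hz'2, hz2])
  refine ⟨key1, hinj, exu, ?_⟩
  -- Part (iii): the inverse map
  classical
  set g : ℂ → ℂ := fun w =>
    if hw : w ∈ Metric.ball (0:ℂ) (r/4) then (exist w hw).choose else 0 with hg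
  have hgspec : ∀ w ∈ Metric.ball (0:ℂ) (r/4),
      ‖g w‖ ≤ 2 * ‖w‖ ∧ h (g w) = w := by
    intro w hw
    simp only [hg, dif_pos hw]
    exact (exist w hw).choose_spec
  have hgmaps : Set.MapsTo g (Metric.ball 0 (r/4)) (Metric.ball 0 (r/2)) := by
    intro w hw
    have hw4 : ‖w‖ < r/4 := by simpa [Complex.dist_eq] using hw
    have := (hgspec w hw).1
    simp only [Metric.mem_ball, Complex.dist_eq, sub_zero]
    linarith
  have hginv : ∀ w ∈ Metric.ball (0:ℂ) (r/4), h (g w) = w :=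
    fun w hw => (hgspec w hw).2
  have hgr : ∀ w ∈ Metric.ball (0:ℂ) (r/4), g w ∈ Metric.ball (0:ℂ) r :=
    fun w hw => hball (hgmaps hw)
  -- bi-Lipschitz bounds for g
  have gkey : ∀ w₁ ∈ Metric.ball (0:ℂ) (r/4), ∀ w₂ ∈ Metric.ball (0:ℂ) (r/4),
      2 / 3 * ‖w₁ - w₂‖ ≤ ‖g w₁ - g w₂‖ ∧
      ‖g w₁ - g w₂‖ ≤ 2 * ‖w₁ - w₂‖ := by
    intro w₁ h₁ w₂ h₂
    have hk := key1 (g w₁) (hgr w₁ h₁) (g w₂) (hgr w₂ h₂)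
    rw [hginv w₁ h₁, hginv w₂ h₂] at hk
    constructor <;> linarith [hk.1, hk.2]
  -- derivative of h is nonzero on the ball
  have hderiv_ne : ∀ a ∈ Metric.ball (0:ℂ) r, deriv h a ≠ 0 := by
    intro a ha hd0
    have hda : HasDerivAt h (deriv h a) a :=
      (hhol.differentiableAt (Metric.isOpen_ball.mem_nhds ha)).hasDerivAt
    rw [hd0, hasDerivAt_iff_tendsto_slope] at hda
    have hnorm : Tendsto (fun z => ‖slope h a z‖) (𝓝[≠] a) (𝓝 0) := by
      have := hda.norm
      simpa using this
    have hev : ∀ᶠ z in 𝓝[≠] a, (1/2 : ℝ) ≤ ‖slope h a z‖ := by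
      have hmem : ∀ᶠ z in 𝓝[≠] a, z ∈ Metric.ball (0:ℂ) r :=
        eventually_nhdsWithin_of_eventually_nhds
          (Metric.isOpen_ball.eventually_mem ha)
      filter_upwards [hmem, self_mem_nhdsWithin] with z hz hz'
      have hne : z - a ≠ 0 := sub_ne_zero.mpr hz'
      have hpos : 0 < ‖z - a‖ :=
        norm_pos_iff.mpr hne
      have hk := (key1 z hz a ha).1
      rw [slope_def_field, norm_div, le_div_iff₀ hpos]
      linarith
    have := ge_of_tendsto hnorm hev
    linarith
  -- holomorphy of g
  have hgdiff : DifferentiableOn ℂ g (Metric.ball 0 (r/4)) := by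
    have hlip : LipschitzOnWith 2 g (Metric.ball 0 (r/4)) := by
      rw [lipschitzOnWith_iff_dist_le_mul]
      intro w₁ h₁ w₂ h₂
      have := (gkey w₁ h₁ w₂ h₂).2
      simp only [Complex.dist_eq]
      calc ‖g w₁ - g w₂‖ ≤ 2 * ‖w₁ - w₂‖ := this
        _ = ((2:NNReal):ℝ) * ‖w₁ - w₂‖ := by norm_num
    intro w hw
    have hcont : ContinuousAt g w :=
      (hlip.continuousOn).continuousAt (Metric.isOpen_ball.mem_nhds hw)
    have hda : HasDerivAt h (deriv h (g w)) (g w) :=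
      (hhol.differentiableAt (Metric.isOpen_ball.mem_nhds (hgr w hw))).hasDerivAt
    have hfg : ∀ᶠ y in 𝓝 w, h (g y) = y := by
      filter_upwards [Metric.isOpen_ball.eventually_mem hw] with y hy
      exact hginv y hy
    exact ((hda.of_local_left_inverse hcont (hderiv_ne _ (hgr w hw)) hfg)
      |>.differentiableAt).differentiableWithinAt
  exact ⟨g, hgmaps, hginv, hgdiff, gkey⟩
end

section
/- Let M be a compact metric space and let 𝔉 be a set of continuous maps ℂ → M that is compact in the topology of uniform convergence on compact subsets of ℂ. Assume that for all ξ, η ∈ 𝔉 with ξ(0) = η(0) there exists θ ∈ ℝ such that η(z) = ξ(e^{iθ}·z) for all z ∈ ℂ. Then for every ξ ∈ 𝔉, every ε > 0 and every r > 0 there exists an open neighborhood V of ξ(0) in M such that for every η ∈ 𝔉 with η(0) ∈ V there exists θ ∈ ℝ with dist(η(e^{iθ}·z), ξ(z)) ≤ ε for all z ∈ ℂ with |z| ≤ r. -/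
/-- **Continuity of the family of parametrized unstable manifolds.**
Let `𝔉` be a compact family (for the topology of uniform convergence on
compact subsets of `ℂ`, i.e. the compact-open topology) of continuous maps
`ℂ → M` into a compact metric space, such that any two members sharing their
value at `0` agree up to a rotation of the variable. Then for every `ξ ∈ 𝔉`,
`ε > 0` and `r > 0` there is a neighborhood `V` of `ξ 0` such that every
`η ∈ 𝔉` with `η 0 ∈ V` is `ε`-close to `ξ` on the disk of radius `r`, after
composition with a rotation. -/
theorem compact_family_rotation_closeness
    {M : Type*} [MetricSpace M] [CompactSpace M]
    (𝔉 : Set C(ℂ, M)) (hcompact : IsCompact 𝔉)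
    (hrot : ∀ ξ ∈ 𝔉, ∀ η ∈ 𝔉, ξ 0 = η 0 →
      ∃ θ : ℝ, ∀ z : ℂ, η z = ξ (Complex.exp (θ * Complex.I) * z)) :
    ∀ ξ ∈ 𝔉, ∀ ε : ℝ, 0 < ε → ∀ r : ℝ, 0 < r →
      ∃ V : Set M, IsOpen V ∧ ξ 0 ∈ V ∧
        ∀ η ∈ 𝔉, η 0 ∈ V →
          ∃ θ : ℝ, ∀ z : ℂ, ‖z‖ ≤ r →
            dist (η (Complex.exp (θ * Complex.I) * z)) (ξ z) ≤ ε := by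
  intro ξ hξ ε hε r hr
  by_contra hcon
  push_neg at hcon
  -- For each n, pick a bad η with η 0 within 1/(n+1) of ξ 0
  have hchoice : ∀ n : ℕ, ∃ η ∈ 𝔉, η 0 ∈ Metric.ball (ξ 0) (1 / (n + 1)) ∧
      ∀ θ : ℝ, ∃ z : ℂ, ‖z‖ ≤ r ∧
        ε < dist (η (Complex.exp (θ * Complex.I) * z)) (ξ z) := by
    intro n
    have hpos : (0 : ℝ) < 1 / (n + 1) := by positivity
    obtain ⟨η, hη, hη0, hbad⟩ := hcon (Metric.ball (ξ 0) (1 / (n + 1)))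
      Metric.isOpen_ball (Metric.mem_ball_self hpos)
    exact ⟨η, hη, hη0, hbad⟩
  choose u hu𝔉 hu0 hubad using hchoice
  -- 𝔉 is sequentially compact since C(ℂ, M) is metrizable
  have hseq : IsSeqCompact 𝔉 := hcompact.isSeqCompact
  obtain ⟨η, hη𝔉, φ, hφ, hlim⟩ := hseq hu𝔉
  -- η 0 = ξ 0
  have h0 : η 0 = ξ 0 := by
    have h1 : Filter.Tendsto (fun n => (u (φ n)) 0) Filter.atTop (nhds (η 0)) :=
      ((continuous_eval_const (0 : ℂ)).tendsto η).comp hlim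
    have h2 : Filter.Tendsto (fun n => (u (φ n)) 0) Filter.atTop (nhds (ξ 0)) := by
      rw [tendsto_iff_dist_tendsto_zero]
      have hto : Filter.Tendsto (fun n : ℕ => (1 : ℝ) / (n + 1)) Filter.atTop (nhds 0) :=
        tendsto_one_div_add_atTop_nhds_zero_nat
      refine squeeze_zero (fun n => dist_nonneg) (fun n => ?_)
        (hto.comp hφ.tendsto_atTop)
      exact le_of_lt (by simpa [Metric.mem_ball] using hu0 (φ n))
    exact tendsto_nhds_unique h1 h2
  obtain ⟨θ, hθ⟩ := hrot η hη𝔉 ξ hξ h0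
  -- uniform convergence on the closed ball of radius r
  have hK : IsCompact (Metric.closedBall (0 : ℂ) r) := isCompact_closedBall 0 r
  have huc : TendstoUniformlyOn (fun n z => (u (φ n)) z) η Filter.atTop
      (Metric.closedBall (0 : ℂ) r) :=
    (ContinuousMap.tendsto_iff_forall_isCompact_tendstoUniformlyOn.mp hlim) _ hK
  rw [Metric.tendstoUniformlyOn_iff] at huc
  obtain ⟨N, hN⟩ := (huc ε hε).exists
  obtain ⟨z, hz, hzbad⟩ := hubad (φ N) θ
  have hmem : Complex.exp (θ * Complex.I) * z ∈ Metric.closedBall (0 : ℂ) r := by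
    simp only [Metric.mem_closedBall, Complex.dist_eq, sub_zero]
    calc ‖Complex.exp (θ * Complex.I) * z‖
        = ‖z‖ := by
          rw [norm_mul, Complex.norm_exp_ofReal_mul_I, one_mul]
      _ ≤ r := hz
  have := hN (Complex.exp (θ * Complex.I) * z) hmem
  rw [hθ z] at hzbad
  rw [dist_comm] at this
  exact absurd this (not_lt.mpr (le_of_lt hzbad))
end

section
/- Let B be a ℤ-valued symmetric bilinear form on ℤ² that is nondegenerate (the determinant of its Gram matrix is nonzero) and isotropic: there exists a nonzero vector v ∈ ℤ² with B(v,v) = 0. Then the group of ℤ-linear automorphisms g of ℤ² satisfying B(g(u), g(w)) = B(u,w) for all u, w ∈ ℤ² is finite. -/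
lemma vec_decomp (v : Fin 2 → ℤ) : v = v 0 • Pi.single 0 1 + v 1 • Pi.single 1 1 := by
  funext i; fin_cases i <;> simp

lemma line_param (α β : ℤ) (h : ¬(α = 0 ∧ β = 0)) (v : Fin 2 → ℤ)
    (hv : α * v 0 + β * v 1 = 0) :
    ∃ t : ℤ, v 0 = -(β / Int.gcd α β) * t ∧ v 1 = (α / Int.gcd α β) * t := by
  set d : ℕ := Int.gcd α β with hd
  have hdpos : 0 < d := by
    rcases Nat.eq_zero_or_pos d with h0 | hp
    · exact absurd (Int.gcd_eq_zero_iff.mp (hd ▸ h0)) h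
    · exact hp
  have hdz : (d : ℤ) ≠ 0 := by exact_mod_cast hdpos.ne'
  set α' : ℤ := α / d with hα'
  set β' : ℤ := β / d with hβ'
  have hαd : (d : ℤ) * α' = α := Int.mul_ediv_cancel' (Int.gcd_dvd_left α β)
  have hβd : (d : ℤ) * β' = β := Int.mul_ediv_cancel' (Int.gcd_dvd_right α β)
  have hcop : IsCoprime α' β' := Int.isCoprime_iff_gcd_eq_one.mpr (Int.gcd_div_gcd_div_gcd hdpos)
  have heq : α' * v 0 + β' * v 1 = 0 := by
    have : (d : ℤ) * (α' * v 0 + β' * v 1) = 0 := by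
      rw [mul_add, ← mul_assoc, ← mul_assoc, hαd, hβd, hv]
    exact (mul_eq_zero.mp this).resolve_left hdz
  have hdvd : α' ∣ v 1 := by
    have h1 : α' ∣ v 1 * β' := ⟨-(v 0), by linarith⟩
    exact hcop.dvd_of_dvd_mul_right h1
  obtain ⟨t, ht⟩ := hdvd
  by_cases hα0 : α' = 0
  · have hβu : β' * β' = 1 := by
      have h2 : Int.gcd α' β' = 1 := Int.gcd_div_gcd_div_gcd hdpos
      rw [hα0] at h2
      have h3 : β'.natAbs = 1 := by simpa [Int.gcd] using h2
      rcases Int.natAbs_eq_iff.mp h3 with h | h <;> simp [h]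
    have hv1 : v 1 = 0 := by
      have hβz : β' ≠ 0 := by intro hb; rw [hb] at hβu; simp at hβu
      rw [hα0] at heq; simpa [hβz] using heq
    refine ⟨-β' * v 0, ?_, ?_⟩
    · linear_combination (-(v 0)) * hβu
    · simp [hα0, hv1]
  · refine ⟨t, ?_, ht⟩
    have h4 : α' * v 0 = α' * (-β' * t) := by rw [ht] at heq; linarith
    have := mul_left_cancel₀ hα0 h4
    linarith

lemma line_finite (α β : ℤ) (h : ¬(α = 0 ∧ β = 0)) (n : ℕ) :
    {v : Fin 2 → ℤ | α * v 0 + β * v 1 = 0 ∧ Int.gcd (v 0) (v 1) = n}.Finite := by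
  set d : ℕ := Int.gcd α β with hd
  have hdpos : 0 < d := by
    rcases Nat.eq_zero_or_pos d with h0 | hp
    · exact absurd (Int.gcd_eq_zero_iff.mp (hd ▸ h0)) h
    · exact hp
  set α' : ℤ := α / d with hα'
  set β' : ℤ := β / d with hβ'
  have hcop : Int.gcd β' α' = 1 := by
    rw [Int.gcd_comm]; exact Int.gcd_div_gcd_div_gcd hdpos
  apply Set.Finite.subset
    ((Set.finite_singleton (![β' * n, -α' * n] : Fin 2 → ℤ)).insert
      (![-β' * n, α' * n] : Fin 2 → ℤ))
  rintro v ⟨hv, hgcd⟩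
  simp only [Set.mem_insert_iff, Set.mem_singleton_iff]
  obtain ⟨t, ht0, ht1⟩ := line_param α β h v hv
  have habs : t.natAbs = n := by
    rw [ht0, ht1] at hgcd
    have : Int.gcd (-β' * t) (α' * t) = t.natAbs := by
      rw [neg_mul, Int.neg_gcd, Int.gcd_mul_right, hcop, one_mul]
    rw [← hgcd, this]
  rcases Int.natAbs_eq_iff.mp habs with h' | h'
  · left; funext i; fin_cases i <;> simp [ht0, ht1, h', hβ', hα', hd]
  · right; funext i; fin_cases i <;> simp [ht0, ht1, h', hβ', hα', hd]

lemma gcd_dvd_map (L : (Fin 2 → ℤ) →ₗ[ℤ] (Fin 2 → ℤ)) (v : Fin 2 → ℤ) :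
    Int.gcd (v 0) (v 1) ∣ Int.gcd (L v 0) (L v 1) := by
  have key : ∀ i, ((Int.gcd (v 0) (v 1) : ℤ)) ∣ L v i := by
    intro i
    have h : L v = v 0 • L (Pi.single 0 1) + v 1 • L (Pi.single 1 1) := by
      conv_lhs => rw [vec_decomp v]
      rw [map_add, map_smul, map_smul]
    rw [h]
    simp only [Pi.add_apply, Pi.smul_apply, smul_eq_mul]
    exact dvd_add (Dvd.dvd.mul_right (Int.gcd_dvd_left _ _) _) (Dvd.dvd.mul_right (Int.gcd_dvd_right _ _) _)
  exact_mod_cast Int.dvd_coe_gcd (key 0) (key 1)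

lemma gcd_map (g : (Fin 2 → ℤ) ≃ₗ[ℤ] (Fin 2 → ℤ)) (v : Fin 2 → ℤ) :
    Int.gcd (g v 0) (g v 1) = Int.gcd (v 0) (v 1) := by
  refine Nat.dvd_antisymm ?_ (gcd_dvd_map g.toLinearMap v)
  have := gcd_dvd_map g.symm.toLinearMap (g v)
  simpa using this

/-- **Isotropic rank-2 lattices have finite isometry groups.** If `B` is a
nondegenerate, symmetric, `ℤ`-valued bilinear form on `ℤ²` which represents
`0` non-trivially, then the group of `ℤ`-linear automorphisms of `ℤ²`
preserving `B` is finite. -/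
theorem isometry_group_finite_of_isotropic
    (B : (Fin 2 → ℤ) →ₗ[ℤ] (Fin 2 → ℤ) →ₗ[ℤ] ℤ)
    (hsymm : ∀ u w, B u w = B w u)
    (hnondeg : (Matrix.of fun i j => B (Pi.single i 1) (Pi.single j 1)).det ≠ 0)
    (hiso : ∃ v : Fin 2 → ℤ, v ≠ 0 ∧ B v v = 0) :
    {g : (Fin 2 → ℤ) ≃ₗ[ℤ] (Fin 2 → ℤ) | ∀ u w, B (g u) (g w) = B u w}.Finite := by
  classical
  set a := B (Pi.single 0 1) (Pi.single 0 1) with ha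
  set b := B (Pi.single 0 1) (Pi.single 1 1) with hb
  set c := B (Pi.single 1 1) (Pi.single 1 1) with hc
  have hdet : a * c - b * b ≠ 0 := by
    rw [Matrix.det_fin_two] at hnondeg
    simpa [Matrix.of_apply, ← ha, ← hb, ← hc, hsymm (Pi.single 1 1) (Pi.single 0 1)] using hnondeg
  have hB : ∀ v w : Fin 2 → ℤ, B v w =
      a * (v 0 * w 0) + b * (v 0 * w 1) + b * (v 1 * w 0) + c * (v 1 * w 1) := by
    intro v w
    conv_lhs => rw [vec_decomp v, vec_decomp w]
    simp only [map_add, map_smul, LinearMap.add_apply, LinearMap.smul_apply, smul_eq_mul,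
      ← ha, ← hb, ← hc, hsymm (Pi.single 1 1) (Pi.single 0 1)]
    ring
  obtain ⟨e, he0, heQ⟩ := hiso
  rw [hB e e] at heQ
  have hepq : ¬(e 0 = 0 ∧ e 1 = 0) := by
    rintro ⟨h0, h1⟩
    exact he0 (by funext i; fin_cases i <;> simp [h0, h1])
  obtain ⟨α₁, β₁, α₂, β₂, f, hL1, hL2, hfQ, hD, hfac⟩ :
      ∃ (α₁ β₁ α₂ β₂ : ℤ) (f : Fin 2 → ℤ),
        ¬(α₁ = 0 ∧ β₁ = 0) ∧ ¬(α₂ = 0 ∧ β₂ = 0) ∧ B f f = 0 ∧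
        e 0 * f 1 - e 1 * f 0 ≠ 0 ∧
        ∀ v : Fin 2 → ℤ, B v v = 0 →
          (α₁ * v 0 + β₁ * v 1 = 0 ∨ α₂ * v 0 + β₂ * v 1 = 0) := by
    by_cases hq : e 1 = 0
    · have hp : e 0 ≠ 0 := fun h => hepq ⟨h, hq⟩
      have ha0 : a = 0 := by
        have h5 : a * (e 0 * e 0) = 0 := by rw [hq] at heQ; linarith
        exact (mul_eq_zero.mp h5).resolve_right (mul_ne_zero hp hp)
      have hbne : b ≠ 0 := by
        intro h; apply hdet; rw [ha0, h]; ring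
      refine ⟨0, 1, 2 * b, c, ![-c, 2 * b], by simp, ?_, ?_, ?_, ?_⟩
      · rintro ⟨h1, _⟩
        exact hbne (by linarith)
      · rw [hB]
        simp only [Matrix.cons_val_zero, Matrix.cons_val_one, Matrix.head_cons]
        linear_combination (c * c) * ha0
      · simp only [Matrix.cons_val_zero, Matrix.cons_val_one, Matrix.head_cons, hq]
        intro hcontr
        have h7 : e 0 * (2 * b) = 0 := by linarith
        rcases mul_eq_zero.mp h7 with h | h
        · exact hp h
        · exact hbne (by linarith)
      · intro v hv
        rw [hB] at hv
        have h8 : v 1 * (2 * b * v 0 + c * v 1) = 0 := by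
          linear_combination hv - (v 0 * v 0) * ha0
        rcases mul_eq_zero.mp h8 with h | h
        · left; linarith
        · right; linarith
    · have hs : a * e 0 + b * e 1 ≠ 0 := by
        intro h0
        have h5 : b * e 0 + c * e 1 = 0 := by
          have h6 : e 1 * (b * e 0 + c * e 1) = 0 := by linear_combination heQ - e 0 * h0
          exact (mul_eq_zero.mp h6).resolve_left hq
        apply hdet
        have h7 : (a * c - b * b) * e 1 = 0 := by linear_combination a * h5 - b * h0
        exact (mul_eq_zero.mp h7).resolve_right hq
      refine ⟨e 1, -(e 0), a * e 1, a * e 0 + 2 * b * e 1,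
        ![-(a * e 0 + 2 * b * e 1), a * e 1], fun h => hq h.1, ?_, ?_, ?_, ?_⟩
      · rintro ⟨h1, h2⟩
        have ha0 : a = 0 := (mul_eq_zero.mp h1).resolve_right hq
        have hb0 : b = 0 := by
          rw [ha0] at h2
          have : (2 * b) * e 1 = 0 := by linarith
          have := (mul_eq_zero.mp this).resolve_right hq
          linarith
        apply hdet; rw [ha0, hb0]; ring
      · rw [hB]
        simp only [Matrix.cons_val_zero, Matrix.cons_val_one, Matrix.head_cons]
        linear_combination (a * a) * heQ
      · simp only [Matrix.cons_val_zero, Matrix.cons_val_one, Matrix.head_cons]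
        intro hcontr
        have h9 : e 1 * (a * e 0 + b * e 1) = 0 := by linarith
        rcases mul_eq_zero.mp h9 with h | h
        · exact hq h
        · exact hs h
      · intro v hv
        rw [hB] at hv
        have h10 : (e 1 * v 0 - e 0 * v 1) *
            (a * e 1 * v 0 + (a * e 0 + 2 * b * e 1) * v 1) = 0 := by
          linear_combination (e 1 * e 1) * hv - (v 1 * v 1) * heQ
        rcases mul_eq_zero.mp h10 with h | h
        · left; linarith
        · right; linarith
  have heQ2 : B e e = 0 := by rw [hB e e]; linarith
  set Z : ℕ → Set (Fin 2 → ℤ) := fun n => {v | B v v = 0 ∧ Int.gcd (v 0) (v 1) = n} with hZ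
  have hZfin : ∀ n, (Z n).Finite := by
    intro n
    apply Set.Finite.subset ((line_finite α₁ β₁ hL1 n).union (line_finite α₂ β₂ hL2 n))
    rintro v ⟨hv, hg⟩
    rcases hfac v hv with h | h
    · exact Or.inl ⟨h, hg⟩
    · exact Or.inr ⟨h, hg⟩
  set D : ℤ := e 0 * f 1 - e 1 * f 0 with hDdef
  apply Set.Finite.of_finite_image (f := fun g : (Fin 2 → ℤ) ≃ₗ[ℤ] (Fin 2 → ℤ) => (g e, g f))
  · apply Set.Finite.subset ((hZfin (Int.gcd (e 0) (e 1))).prod (hZfin (Int.gcd (f 0) (f 1))))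
    rintro p ⟨g, hg, rfl⟩
    simp only [Set.mem_setOf_eq] at hg
    refine Set.mem_prod.mpr ⟨⟨?_, gcd_map g e⟩, ⟨?_, gcd_map g f⟩⟩
    · rw [hg e e]; exact heQ2
    · rw [hg f f]; exact hfQ
  · rintro g _ g' _ hfe
    have h1 : g e = g' e := congrArg Prod.fst hfe
    have h2 : g f = g' f := congrArg Prod.snd hfe
    apply LinearEquiv.ext
    intro v
    have hdecomp : D • v = (f 1 * v 0 - f 0 * v 1) • e + (e 0 * v 1 - e 1 * v 0) • f := by
      funext i
      fin_cases i <;>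
        · simp only [Fin.mk_zero, Fin.mk_one, Pi.smul_apply, Pi.add_apply, smul_eq_mul, hDdef]
          ring
    have h3 : D • (g v) = D • (g' v) := by
      calc D • (g v) = g (D • v) := (map_smul g D v).symm
        _ = (f 1 * v 0 - f 0 * v 1) • g e + (e 0 * v 1 - e 1 * v 0) • g f := by
            rw [hdecomp, map_add, map_smul, map_smul]
        _ = (f 1 * v 0 - f 0 * v 1) • g' e + (e 0 * v 1 - e 1 * v 0) • g' f := by
            rw [h1, h2]
        _ = g' (D • v) := by rw [hdecomp, map_add, map_smul, map_smul]
        _ = D • (g' v) := map_smul g' D v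
    funext i
    have h4 := congrFun h3 i
    simp only [Pi.smul_apply, smul_eq_mul] at h4
    exact mul_left_cancel₀ hD h4
end

section
/- Let B be a ℤ-valued symmetric bilinear form on ℤ² whose Gram matrix has negative determinant (so B is nondegenerate of signature (1,1)), and assume B is anisotropic: B(v,v) ≠ 0 for every nonzero v ∈ ℤ². Then the group of ℤ-linear automorphisms g of ℤ² satisfying B(g(u), g(w)) = B(u,w) for all u, w ∈ ℤ² is infinite. -/
/-- The standard automorph of a binary quadratic form attached to a Pell solution. -/
def pellEquiv (α β γ t u : ℤ) (h : t^2 - (β^2 - α*γ)*u^2 = 1) :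
    (Fin 2 → ℤ) ≃ₗ[ℤ] (Fin 2 → ℤ) :=
  LinearEquiv.ofLinear
    (Matrix.toLin' !![t - β*u, -(γ*u); α*u, t + β*u])
    (Matrix.toLin' !![t + β*u, γ*u; -(α*u), t - β*u])
    (by
      rw [← Matrix.toLin'_mul]
      have hMN : (!![t - β*u, -(γ*u); α*u, t + β*u] *
          !![t + β*u, γ*u; -(α*u), t - β*u]) = 1 := by
        ext i j
        fin_cases i <;> fin_cases j <;>
          simp [Matrix.mul_apply, Fin.sum_univ_two, Matrix.one_apply] <;>
          first | linear_combination h | ring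
      rw [hMN, Matrix.toLin'_one])
    (by
      rw [← Matrix.toLin'_mul]
      have hNM : (!![t + β*u, γ*u; -(α*u), t - β*u] *
          !![t - β*u, -(γ*u); α*u, t + β*u]) = 1 := by
        ext i j
        fin_cases i <;> fin_cases j <;>
          simp [Matrix.mul_apply, Fin.sum_univ_two, Matrix.one_apply] <;>
          first | linear_combination h | ring
      rw [hNM, Matrix.toLin'_one])

lemma pellEquiv_apply (α β γ t u : ℤ) (h : t^2 - (β^2 - α*γ)*u^2 = 1) (v : Fin 2 → ℤ) :
    pellEquiv α β γ t u h v =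
      ![(t - β*u) * v 0 - γ*u * v 1, α*u * v 0 + (t + β*u) * v 1] := by
  funext i
  fin_cases i <;>
    simp [pellEquiv, LinearEquiv.ofLinear_apply, Matrix.toLin'_apply, Matrix.mulVec,
      dotProduct, Fin.sum_univ_two] <;> try ring

/-- **Anisotropic hyperbolic rank-2 lattices have infinite isometry groups.**
If `B` is a symmetric `ℤ`-valued bilinear form on `ℤ²` whose Gram matrix has
negative determinant (signature `(1,1)`) and which does not represent `0`
non-trivially, then the group of `ℤ`-linear automorphisms of `ℤ²` preserving
`B` is infinite. -/
theorem isometry_group_infinite_of_anisotropic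
    (B : (Fin 2 → ℤ) →ₗ[ℤ] (Fin 2 → ℤ) →ₗ[ℤ] ℤ)
    (hsymm : ∀ u w, B u w = B w u)
    (hdet : (Matrix.of fun i j => B (Pi.single i 1) (Pi.single j 1)).det < 0)
    (haniso : ∀ v : Fin 2 → ℤ, v ≠ 0 → B v v ≠ 0) :
    {g : (Fin 2 → ℤ) ≃ₗ[ℤ] (Fin 2 → ℤ) | ∀ u w, B (g u) (g w) = B u w}.Infinite := by
  set e0 : Fin 2 → ℤ := Pi.single 0 1 with he0
  set e1 : Fin 2 → ℤ := Pi.single 1 1 with he1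
  set α : ℤ := B e0 e0 with hα
  set β : ℤ := B e0 e1 with hβ
  set γ : ℤ := B e1 e1 with hγ
  have hba : B e1 e0 = β := hsymm e1 e0
  -- expansion of B in coordinates
  have hv : ∀ v : Fin 2 → ℤ, v = v 0 • e0 + v 1 • e1 := by
    intro v; funext i; fin_cases i <;> simp [he0, he1]
  have Bexp : ∀ v w : Fin 2 → ℤ,
      B v w = α * (v 0 * w 0) + β * (v 0 * w 1) + β * (v 1 * w 0) + γ * (v 1 * w 1) := by
    intro v w
    conv_lhs => rw [hv v, hv w]
    simp only [map_add, map_smul, LinearMap.add_apply, LinearMap.smul_apply, smul_eq_mul, hba]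
    rw [← hα, ← hβ, ← hγ]
    ring
  -- determinant condition
  rw [Matrix.det_fin_two] at hdet
  simp only [Matrix.of_apply] at hdet
  have hd : 0 < β^2 - α*γ := by
    rw [← he0, ← he1, ← hα, ← hβ, ← hγ, hba] at hdet
    nlinarith [hdet]
  have hα0 : α ≠ 0 := by
    apply haniso
    intro h
    have := congrFun h 0
    simp [he0] at this
  -- d is not a square
  have hns : ¬ IsSquare (β^2 - α*γ) := by
    rintro ⟨k, hk⟩
    set v : Fin 2 → ℤ := ![β + k, -α] with hvdef
    have hvne : v ≠ 0 := by
      intro h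
      have := congrFun h 1
      simp [hvdef] at this
      exact hα0 this
    apply haniso v hvne
    rw [Bexp]
    show α * ((β+k) * (β+k)) + β * ((β+k) * (-α)) + β * ((-α) * (β+k)) + γ * ((-α) * (-α)) = 0
    linear_combination (-α) * hk
  -- a positive Pell solution
  obtain ⟨s, hs1, hs2⟩ := Pell.Solution₁.exists_pos_of_not_isSquare hd hns
  have hsx : 0 < s.x := lt_trans one_pos hs1
  -- the sequence of isometries
  set y : ℕ → ℤ := fun n => (s ^ (n+1)).y with hy
  set x : ℕ → ℤ := fun n => (s ^ (n+1)).x with hx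
  have hprop : ∀ n, (x n)^2 - (β^2 - α*γ) * (y n)^2 = 1 := fun n => (s ^ (n+1)).prop
  have hymono : StrictMono y := by
    apply strictMono_nat_of_lt_succ
    intro n
    have h1 : (s ^ (n+2)).y = s.x * (s ^ (n+1)).y + s.y * (s ^ (n+1)).x := by
      rw [pow_succ' s (n+1), Pell.Solution₁.y_mul]
    have h2 : 0 < (s ^ (n+1)).y := Pell.Solution₁.y_pow_succ_pos hsx hs2 n
    have h3 : 0 < (s ^ (n+1)).x := Pell.Solution₁.x_pow_pos hsx (n+1)
    simp only [hy]
    rw [h1]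
    nlinarith
  set F : ℕ → ((Fin 2 → ℤ) ≃ₗ[ℤ] (Fin 2 → ℤ)) :=
    fun n => pellEquiv α β γ (x n) (y n) (hprop n) with hF
  refine Set.infinite_of_injective_forall_mem (f := F) ?_ ?_
  · -- injectivity
    intro m n hmn
    have h1 : F m e0 = F n e0 := by rw [hmn]
    rw [hF] at h1
    simp only [pellEquiv_apply] at h1
    have h2 := congrFun h1 1
    have he00 : e0 0 = 1 := by simp [he0]
    have he01 : e0 1 = 0 := by simp [he0]
    simp [he00, he01] at h2
    have : y m = y n := by
      rcases h2 with h | h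
      · exact h
      · exact absurd h hα0
    exact hymono.injective this
  · -- each F n is an isometry
    intro n
    intro v w
    rw [hF]
    simp only [pellEquiv_apply]
    rw [Bexp, Bexp v w]
    simp only [Matrix.cons_val_zero, Matrix.cons_val_one, Matrix.head_cons]
    linear_combination (α * (v 0 * w 0) + β * (v 0 * w 1) + β * (v 1 * w 0) + γ * (v 1 * w 1)) * hprop n
end
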